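/- arXiv:1507.02975 — 5 statements merged into one kernel-verified Lean document; each statement's English description precedes it below -/
import Mathlib

section
/- (Repudiation bound, case e_C > s_a) Suppose a string of length L contains exactly ceil(e_C * L) marked positions (mismatches), and a uniformly random subset of size L/2 is selected (L even). If e_C > s_a, the probability that the selected subset contains fewer than s_a * L / 2 marked positions is at most exp(-(e_C - s_a)^2 * L). -/
open Finset

lemma card_supersets {α : Type*} [Fintype α] [DecidableEq α] (n : ℕ) (J : Finset α)
    (hJ : J.card ≤ n) :
    ((Finset.univ.powersetCard n).filter (fun S => J ⊆ S)).card
      = (Fintype.card α - J.card).choose (n - J.card) := by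
  have h1 : (Jᶜ.powersetCard (n - J.card)).card = (Fintype.card α - J.card).choose (n - J.card) := by
    rw [Finset.card_powersetCard, Finset.card_compl]
  rw [← h1]
  apply Finset.card_bij (fun S _ => S \ J)
  · intro S hS
    simp only [mem_filter, Finset.mem_powersetCard_univ] at hS
    rw [Finset.mem_powersetCard]
    refine ⟨fun x hx => ?_, by rw [Finset.card_sdiff_of_subset hS.2, hS.1]⟩
    · rw [Finset.mem_sdiff] at hx
      simp [hx.2]
  · intro S hS T hT h
    simp only [mem_filter, Finset.mem_powersetCard_univ] at hS hT
    have : S \ J ∪ J = T \ J ∪ J := by rw [h]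
    rwa [Finset.sdiff_union_of_subset hS.2, Finset.sdiff_union_of_subset hT.2] at this
  · intro T hT
    rw [Finset.mem_powersetCard] at hT
    have hdisj : Disjoint T J := by
      refine Finset.disjoint_left.mpr fun x hx hxJ => ?_
      have := hT.1 hx
      simp [Finset.mem_compl] at this
      exact this hxJ
    refine ⟨T ∪ J, ?_, ?_⟩
    · simp only [mem_filter, Finset.mem_powersetCard_univ]
      refine ⟨?_, Finset.subset_union_right⟩
      rw [Finset.card_union_of_disjoint hdisj, hT.2]
      omega
    · exact Finset.union_sdiff_cancel_right hdisj

lemma sum_choose_inter {α : Type*} [Fintype α] [DecidableEq α] (n j : ℕ) (M : Finset α)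
    (hj : j ≤ n) :
    ∑ S ∈ Finset.univ.powersetCard n, ((S ∩ M).card.choose j)
      = M.card.choose j * (Fintype.card α - j).choose (n - j) := by
  have step1 : ∀ S : Finset α, (S ∩ M).card.choose j
      = ((M.powersetCard j).filter (fun J => J ⊆ S)).card := by
    intro S
    rw [← Finset.card_powersetCard]
    congr 1
    ext J
    simp only [Finset.mem_powersetCard, Finset.mem_filter, Finset.subset_inter_iff]
    tauto
  simp only [step1, Finset.card_filter]
  rw [Finset.sum_comm]
  have step2 : ∀ J ∈ M.powersetCard j,
      (∑ S ∈ Finset.univ.powersetCard n, if J ⊆ S then (1:ℕ) else 0)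
        = (Fintype.card α - j).choose (n - j) := by
    intro J hJ
    rw [Finset.mem_powersetCard] at hJ
    rw [← Finset.card_filter, card_supersets n J (hJ.2 ▸ hj), hJ.2]
  rw [Finset.sum_congr rfl step2, Finset.sum_const, Finset.card_powersetCard, smul_eq_mul]

lemma chvatal_term (N n m : ℕ) (hn : n ≤ N) (hm : m ≤ N) :
    ∀ j, j ≤ n → m.choose j * (N - j).choose (n - j) * N ^ j
      ≤ m ^ j * (n.choose j * N.choose n) := by
  intro j
  induction j with
  | zero => simp
  | succ j IH =>
    intro hj1
    have hjn : j < n := by omega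
    have IH' := IH (le_of_lt hjn)
    rcases le_or_gt m j with hmj | hjm
    · rw [Nat.choose_eq_zero_of_lt (by omega : m < j + 1)]
      simp
    · -- main case
      have hNj : 0 < N - j := by omega
      refine Nat.le_of_mul_le_mul_right ?_ (show 0 < (j+1) * (N-j) by positivity)
      have hA : m.choose (j+1) * (j+1) = m.choose j * (m - j) := Nat.choose_succ_right_eq m j
      have hB : n.choose (j+1) * (j+1) = n.choose j * (n - j) := Nat.choose_succ_right_eq n j
      have hC : (N - j) * (N - (j+1)).choose (n - (j+1)) = (N - j).choose (n - j) * (n - j) := by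
        have := Nat.add_one_mul_choose_eq (N - j - 1) (n - j - 1)
        have e1 : N - j - 1 + 1 = N - j := by omega
        have e2 : n - j - 1 + 1 = n - j := by omega
        rw [e1, e2] at this
        have e3 : N - (j+1) = N - j - 1 := by omega
        have e4 : n - (j+1) = n - j - 1 := by omega
        rw [e3, e4, this]
      have h1 : (m - j) * N ≤ m * (N - j) := by
        have : (m - j) * N = m * N - j * N := by rw [Nat.sub_mul]
        have h2 : m * (N - j) = m * N - m * j := by rw [Nat.mul_sub]
        rw [this, h2]
        apply Nat.sub_le_sub_left
        calc m * j ≤ N * j := Nat.mul_le_mul_right j hm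
          _ = j * N := Nat.mul_comm N j
      calc m.choose (j+1) * (N - (j+1)).choose (n - (j+1)) * N ^ (j+1) * ((j+1) * (N-j))
          = (m.choose (j+1) * (j+1)) * ((N - j) * (N - (j+1)).choose (n - (j+1))) * N ^ (j+1) := by ring
        _ = (m.choose j * (m - j)) * ((N - j).choose (n - j) * (n - j)) * N ^ (j+1) := by rw [hA, hC]
        _ = (m.choose j * (N - j).choose (n - j) * N ^ j) * ((m - j) * N) * (n - j) := by ring
        _ ≤ (m ^ j * (n.choose j * N.choose n)) * (m * (N - j)) * (n - j) :=
            Nat.mul_le_mul (Nat.mul_le_mul IH' h1) le_rfl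
        _ = m ^ (j+1) * ((n.choose j * (n - j)) * N.choose n) * (N - j) := by ring
        _ = m ^ (j+1) * ((n.choose (j+1) * (j+1)) * N.choose n) * (N - j) := by rw [hB]
        _ = m ^ (j+1) * (n.choose (j+1) * N.choose n) * ((j+1) * (N-j)) := by ring

lemma chvatal_mgf {α : Type*} [Fintype α] [DecidableEq α] (n : ℕ) (M : Finset α)
    (hn : n ≤ Fintype.card α) (hN : 0 < Fintype.card α) (t : ℝ) (ht : 1 ≤ t) :
    ∑ S ∈ Finset.univ.powersetCard n, t ^ (S ∩ M).card
      ≤ ((Fintype.card α).choose n : ℝ)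
          * (1 + (t - 1) * M.card / Fintype.card α) ^ n := by
  set N := Fintype.card α with hNdef
  set m := M.card with hmdef
  have hmN : m ≤ N := M.card_le_univ
  set u : ℝ := t - 1 with hu
  have hu0 : 0 ≤ u := by simp [hu]; linarith
  have step1 : ∀ S ∈ Finset.univ.powersetCard n,
      t ^ (S ∩ M).card = ∑ j ∈ Finset.range (n+1), ((S ∩ M).card.choose j : ℝ) * u ^ j := by
    intro S hS
    have hk : (S ∩ M).card ≤ n := by
      rw [Finset.mem_powersetCard_univ] at hS
      exact le_trans (Finset.card_le_card Finset.inter_subset_left) hS.le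
    have : t = u + 1 := by ring
    rw [this, add_pow]
    rw [Finset.sum_subset (Finset.range_subset_range.mpr (Nat.succ_le_succ hk))]
    · apply Finset.sum_congr rfl
      intro j hj
      ring
    · intro j hj hj2
      rw [Finset.mem_range] at hj hj2
      rw [Nat.choose_eq_zero_of_lt (by omega)]
      simp
  rw [Finset.sum_congr rfl step1, Finset.sum_comm]
  have step2 : ∀ j ∈ Finset.range (n+1),
      ∑ S ∈ Finset.univ.powersetCard n, ((S ∩ M).card.choose j : ℝ) * u ^ j
        ≤ (n.choose j : ℝ) * (N.choose n) * (u * m / N) ^ j := by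
    intro j hj
    rw [Finset.mem_range] at hj
    rw [← Finset.sum_mul, ← Nat.cast_sum, sum_choose_inter n j M (by omega)]
    have key := chvatal_term N n m hn hmN j (by omega)
    have hNpos : (0:ℝ) < N := by exact_mod_cast hN
    have hNj : (0:ℝ) < (N:ℝ) ^ j := by positivity
    have key' : ((m.choose j : ℝ) * ((N - j).choose (n - j)) * (N:ℝ) ^ j)
        ≤ (m:ℝ) ^ j * ((n.choose j : ℝ) * (N.choose n : ℝ)) := by exact_mod_cast key
    have expand : ((m.choose j * (N - j).choose (n - j) : ℕ) : ℝ) * u ^ j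
        = ((m.choose j : ℝ) * ((N - j).choose (n - j)) * (N:ℝ) ^ j) * (u ^ j / (N:ℝ) ^ j) := by
      push_cast
      field_simp
    rw [expand]
    calc ((m.choose j : ℝ) * ((N - j).choose (n - j)) * (N:ℝ) ^ j) * (u ^ j / (N:ℝ) ^ j)
        ≤ ((m:ℝ) ^ j * ((n.choose j : ℝ) * (N.choose n : ℝ))) * (u ^ j / (N:ℝ) ^ j) :=
          mul_le_mul_of_nonneg_right key' (by positivity)
      _ = (n.choose j : ℝ) * (N.choose n) * (u * m / N) ^ j := by
          rw [div_pow, mul_pow]; ring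
  calc _ ≤ ∑ j ∈ Finset.range (n+1), (n.choose j : ℝ) * (N.choose n) * (u * m / N) ^ j :=
        Finset.sum_le_sum step2
    _ = (N.choose n : ℝ) * ∑ j ∈ Finset.range (n+1), (u * m / N) ^ j * 1 ^ (n - j) * (n.choose j) := by
        rw [Finset.mul_sum]; apply Finset.sum_congr rfl; intro j _; ring
    _ = (N.choose n : ℝ) * (u * m / N + 1) ^ n := by rw [← add_pow]
    _ = (N.choose n : ℝ) * (1 + u * m / N) ^ n := by ring_nf

lemma chvatal_mgf_lower {α : Type*} [Fintype α] [DecidableEq α] (n : ℕ) (M : Finset α)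
    (hn : n ≤ Fintype.card α) (hN : 0 < Fintype.card α) (s : ℝ) (hs0 : 0 < s) (hs1 : s ≤ 1) :
    ∑ S ∈ Finset.univ.powersetCard n, s ^ (S ∩ M).card
      ≤ ((Fintype.card α).choose n : ℝ)
          * (1 - M.card / Fintype.card α + (M.card / Fintype.card α) * s) ^ n := by
  set N := Fintype.card α with hNdef
  set m := M.card with hmdef
  have hmN : m ≤ N := M.card_le_univ
  have hNpos : (0:ℝ) < N := by exact_mod_cast hN
  have hsne : s ≠ 0 := ne_of_gt hs0
  have step1 : ∀ S ∈ Finset.univ.powersetCard n,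
      s ^ (S ∩ M).card = s ^ n * (1/s) ^ (S ∩ Mᶜ).card := by
    intro S hS
    rw [Finset.mem_powersetCard_univ] at hS
    have hsplit : (S ∩ M).card + (S \ M).card = S.card := Finset.card_inter_add_card_sdiff S M
    have hC : S ∩ Mᶜ = S \ M := by ext x; simp [Finset.mem_sdiff]
    rw [hC]
    have hk : (S \ M).card = n - (S ∩ M).card := by omega
    have hk2 : (S ∩ M).card ≤ n := by omega
    rw [hk, one_div, inv_pow, eq_comm, mul_inv_eq_iff_eq_mul₀ (by positivity), ← pow_add]
    congr 1
    omega
  rw [Finset.sum_congr rfl step1, ← Finset.mul_sum]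
  have hmc : (Mᶜ).card = N - m := by rw [Finset.card_compl]
  have ht : (1:ℝ) ≤ 1/s := by rw [le_div_iff₀ hs0]; linarith
  have key := chvatal_mgf n Mᶜ hn hN (1/s) ht
  rw [hmc] at key
  calc s ^ n * ∑ S ∈ Finset.univ.powersetCard n, (1/s) ^ (S ∩ Mᶜ).card
      ≤ s ^ n * ((N.choose n : ℝ) * (1 + (1/s - 1) * ((N - m : ℕ):ℝ) / N) ^ n) := by
        apply mul_le_mul_of_nonneg_left key (by positivity)
    _ = (N.choose n : ℝ) * (s * (1 + (1/s - 1) * ((N - m : ℕ):ℝ) / N)) ^ n := by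
        rw [mul_pow]; ring
    _ = (N.choose n : ℝ) * (1 - m / N + (m / N) * s) ^ n := by
        congr 2
        rw [Nat.cast_sub hmN]
        field_simp
        ring

lemma hoeffding_scalar (p : ℝ) (hp0 : 0 ≤ p) (hp1 : p ≤ 1) (h : ℝ) (hh : 0 ≤ h) :
    1 - p + p * Real.exp (-h) ≤ Real.exp (-p * h + h^2 / 8) := by
  set g : ℝ → ℝ := fun x => 1 - p + p * Real.exp (-x) with hg
  have hgpos : ∀ x, 0 < g x := by
    intro x
    rcases eq_or_lt_of_le hp0 with hp | hp
    · simp [hg, ← hp]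
    · have := Real.exp_pos (-x)
      have : 0 < p * Real.exp (-x) := by positivity
      simp only [hg]
      nlinarith
  have hgderiv : ∀ x, HasDerivAt g (-(p * Real.exp (-x))) x := by
    intro x
    have h1 : HasDerivAt (fun x : ℝ => -x) (-1) x := (hasDerivAt_id x).neg
    have h2 : HasDerivAt (fun x : ℝ => Real.exp (-x)) (Real.exp (-x) * (-1)) x :=
      (Real.hasDerivAt_exp (-x)).comp x h1
    have h3 := ((h2.const_mul p).const_add (1 - p))
    refine h3.congr_deriv ?_
    ring
  set ψ : ℝ → ℝ := fun x => p - x/4 - p * Real.exp (-x) / g x with hψ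
  have hψderiv : ∀ x, HasDerivAt ψ (-(1/4) + (1 - p) * (p * Real.exp (-x)) / (g x)^2) x := by
    intro x
    have h1 : HasDerivAt (fun x : ℝ => -x) (-1) x := (hasDerivAt_id x).neg
    have h2 : HasDerivAt (fun x : ℝ => Real.exp (-x)) (Real.exp (-x) * (-1)) x :=
      (Real.hasDerivAt_exp (-x)).comp x h1
    have h2' : HasDerivAt (fun x : ℝ => p * Real.exp (-x)) (p * (Real.exp (-x) * (-1))) x :=
      h2.const_mul p
    have hq : HasDerivAt (fun x => p * Real.exp (-x) / g x)
        ((p * (Real.exp (-x) * (-1)) * g x - p * Real.exp (-x) * (-(p * Real.exp (-x)))) / (g x)^2) x :=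
      h2'.div (hgderiv x) (ne_of_gt (hgpos x))
    have hl : HasDerivAt (fun x : ℝ => p - x/4) (-(1/4)) x := by
      have : HasDerivAt (fun x : ℝ => x/4) (1/4) x := (hasDerivAt_id x).div_const 4
      simpa using (this.const_sub p)
    refine (hl.sub hq).congr_deriv ?_
    have hgx := hgpos x
    field_simp
    simp only [hg]
    ring_nf
  have hψ0 : ψ 0 = 0 := by
    simp [hψ, hg]
  have hψanti : Antitone ψ := by
    apply antitone_of_deriv_nonpos
    · intro x
      exact (hψderiv x).differentiableAt
    · intro x
      rw [(hψderiv x).deriv]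
      have hgx := hgpos x
      have hE := Real.exp_pos (-x)
      have amgm : (1 - p) * (p * Real.exp (-x)) ≤ (g x)^2 / 4 := by
        simp only [hg]
        nlinarith [sq_nonneg ((1 - p) - p * Real.exp (-x))]
      have h2 : (1 - p) * (p * Real.exp (-x)) / g x ^ 2 ≤ 1/4 := by
        rw [div_le_iff₀ (by positivity)]
        nlinarith [amgm]
      linarith
  have hψle : ∀ x, 0 ≤ x → ψ x ≤ 0 := fun x hx => (hψanti hx).trans_eq hψ0
  set φ : ℝ → ℝ := fun x => Real.log (g x) + p * x - x^2/8 with hφ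
  have hφderiv : ∀ x, HasDerivAt φ (ψ x) x := by
    intro x
    have hlog : HasDerivAt (fun x => Real.log (g x)) (-(p * Real.exp (-x)) / g x) x :=
      (hgderiv x).log (ne_of_gt (hgpos x))
    have hlin : HasDerivAt (fun x : ℝ => p * x - x^2/8) (p - x/4) x := by
      have h1 : HasDerivAt (fun y : ℝ => p * y) p x := by
        simpa using (hasDerivAt_id x).const_mul p
      have h2 : HasDerivAt (fun y : ℝ => y^2/8) (x/4) x := by
        have h3 := (hasDerivAt_pow 2 x).div_const 8
        refine h3.congr_deriv ?_
        norm_num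
        ring
      exact h1.sub h2
    have heq : ψ x = -(p * Real.exp (-x)) / g x + (p - x/4) := by
      simp only [hψ]; ring
    have e1 : φ = fun y => Real.log (g y) + (p * y - y^2/8) := by
      funext y; simp only [hφ]; ring
    rw [heq, e1]
    exact hlog.add hlin
  have hφ0 : φ 0 = 0 := by simp [hφ, hg]
  have hφanti : AntitoneOn φ (Set.Ici 0) := by
    apply antitoneOn_of_deriv_nonpos (convex_Ici 0)
    · exact Continuous.continuousOn (by
        fun_prop (disch := intro x; exact ne_of_gt (hgpos x)))
    · intro x hx
      exact ((hφderiv x).differentiableAt).differentiableWithinAt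
    · intro x hx
      rw [(hφderiv x).deriv]
      exact hψle x (le_of_lt (by simpa using hx))
  have hmain : φ h ≤ 0 := by
    rw [← hφ0]
    exact hφanti (Set.mem_Ici.mpr le_rfl) (Set.mem_Ici.mpr hh) hh
  have hlog : Real.log (g h) ≤ -p * h + h^2/8 := by
    simp only [hφ] at hmain
    linarith
  calc g h = Real.exp (Real.log (g h)) := (Real.exp_log (hgpos h)).symm
    _ ≤ Real.exp (-p * h + h^2/8) := Real.exp_le_exp.mpr hlog



/-- Repudiation bound, case `e_C > s_a`. A string of length `L`
(`L` even) contains exactly `⌈e_C L⌉` marked (mismatch) positions; a uniformly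
random subset of size `L/2` is selected. If `e_C > s_a`, the probability that
the selected subset contains fewer than `s_a L / 2` marked positions is at most
`exp(-(e_C - s_a)² L)`. -/
theorem repudiation_lower_tail_bound
    (L : ℕ) (hL : 0 < L) (hLeven : Even L)
    (eC sa : ℝ) (hsa : 0 ≤ sa) (heC : eC ≤ 1) (hlt : sa < eC)
    (M : Finset (Fin L)) (hM : M.card = ⌈eC * L⌉₊) :
    (({S : Finset (Fin L) | S.card = L / 2 ∧
          ((S ∩ M).card : ℝ) < sa * L / 2}.ncard : ℝ) / (L.choose (L / 2))
      ≤ Real.exp (-(eC - sa) ^ 2 * L)) := by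
  classical
  obtain ⟨c, hc⟩ := hLeven
  set n := L / 2 with hn
  have hnc : n = c := by omega
  have hnL : n ≤ L := by omega
  set m := M.card with hm
  have hmL : m ≤ L := by simpa using M.card_le_univ
  have hLpos : (0:ℝ) < L := by exact_mod_cast hL
  have hmge : eC * L ≤ (m:ℝ) := by
    rw [hM]
    exact Nat.le_ceil _
  set τ := eC - sa with hτdef
  have hτ : 0 < τ := by simp only [hτdef]; linarith
  set lam := 4 * τ with hlamdef
  have hlam : 0 < lam := by positivity
  set s := Real.exp (-lam) with hsdef
  have hs0 : 0 < s := Real.exp_pos _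
  have hs1 : s ≤ 1 := Real.exp_le_one_iff.mpr (by linarith)
  set B := Finset.univ.filter (fun S : Finset (Fin L) =>
    S.card = L / 2 ∧ ((S ∩ M).card : ℝ) < sa * L / 2) with hB
  have hset : {S : Finset (Fin L) | S.card = L / 2 ∧ ((S ∩ M).card : ℝ) < sa * L / 2}
      = ↑B := by
    ext S; simp [hB]
  rw [hset, Set.ncard_coe_finset]
  have hCpos : (0:ℝ) < (L.choose n : ℝ) := by
    exact_mod_cast Nat.choose_pos hnL
  rw [div_le_iff₀ hCpos]
  -- Chvatal bound
  have key := chvatal_mgf_lower (α := Fin L) n M (by simpa using hnL) (by simpa using hL) s hs0 hs1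
  simp only [Fintype.card_fin] at key
  -- Markov step
  have hBsub : B ⊆ Finset.univ.powersetCard n := by
    intro S hS
    rw [hB, Finset.mem_filter] at hS
    exact Finset.mem_powersetCard_univ.mpr hS.2.1
  have markov : (B.card : ℝ) * Real.exp (-(lam * (sa * L / 2)))
      ≤ ∑ S ∈ Finset.univ.powersetCard n, s ^ (S ∩ M).card := by
    calc (B.card : ℝ) * Real.exp (-(lam * (sa * L / 2)))
        = ∑ _S ∈ B, Real.exp (-(lam * (sa * L / 2))) := by
          rw [Finset.sum_const, nsmul_eq_mul]
      _ ≤ ∑ S ∈ B, s ^ (S ∩ M).card := by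
          apply Finset.sum_le_sum
          intro S hS
          rw [hB, Finset.mem_filter] at hS
          have hk := hS.2.2
          rw [hsdef, ← Real.exp_nat_mul]
          apply Real.exp_le_exp.mpr
          have : ((S ∩ M).card : ℝ) * lam < lam * (sa * ↑L / 2) := by
            rw [mul_comm lam]
            exact mul_lt_mul_of_pos_right hk hlam
          nlinarith
      _ ≤ ∑ S ∈ Finset.univ.powersetCard n, s ^ (S ∩ M).card := by
          apply Finset.sum_le_sum_of_subset_of_nonneg hBsub
          intro S _ _
          positivity
  -- Hoeffding step
  set p := (m:ℝ) / L with hp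
  have hp0 : 0 ≤ p := by positivity
  have hp1 : p ≤ 1 := by
    rw [hp, div_le_one hLpos]
    exact_mod_cast hmL
  have hoeff := hoeffding_scalar p hp0 hp1 lam hlam.le
  have hbase : (0:ℝ) ≤ 1 - p + p * s := by nlinarith [mul_nonneg hp0 hs0.le]
  have base_pow : (1 - p + p * s) ^ n ≤ Real.exp (n * (-p * lam + lam^2 / 8)) := by
    calc (1 - p + p * s) ^ n ≤ (Real.exp (-p * lam + lam^2 / 8)) ^ n := by
          apply pow_le_pow_left₀ hbase
          rw [hsdef]
          exact hoeff
      _ = Real.exp (n * (-p * lam + lam^2 / 8)) := (Real.exp_nat_mul _ n).symm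
  -- assemble
  have hnreal : (n:ℝ) = (L:ℝ) / 2 := by
    have : (L:ℝ) = (c:ℝ) + (c:ℝ) := by exact_mod_cast hc
    rw [hnc]
    linarith
  calc (B.card : ℝ)
      = (B.card * Real.exp (-(lam * (sa * L / 2)))) * Real.exp (lam * (sa * L / 2)) := by
        rw [mul_assoc, ← Real.exp_add]
        simp
    _ ≤ ((L.choose n : ℝ) * Real.exp ((n:ℝ) * (-p * lam + lam^2 / 8)))
          * Real.exp (lam * (sa * L / 2)) := by
        apply mul_le_mul_of_nonneg_right _ (Real.exp_pos _).le
        refine markov.trans (key.trans ?_)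
        exact mul_le_mul_of_nonneg_left base_pow hCpos.le
    _ = (L.choose n : ℝ) * Real.exp ((n:ℝ) * (-p * lam + lam^2 / 8) + lam * (sa * L / 2)) := by
        rw [mul_assoc, ← Real.exp_add]
    _ ≤ (L.choose n : ℝ) * Real.exp (-(eC - sa)^2 * L) := by
        apply mul_le_mul_of_nonneg_left _ hCpos.le
        apply Real.exp_le_exp.mpr
        have expand : (n:ℝ) * (-p * lam + lam^2 / 8) + lam * (sa * L / 2)
            = -(m:ℝ) * lam / 2 + (L:ℝ) * lam^2 / 16 + lam * sa * (L:ℝ) / 2 := by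
          rw [hnreal, hp]
          field_simp
          ring
        rw [expand]
        have h1 : -(m:ℝ) * lam / 2 ≤ -(eC * L) * lam / 2 := by nlinarith
        have h2 : -(eC * L) * lam / 2 + (L:ℝ) * lam^2 / 16 + lam * sa * (L:ℝ) / 2
            = -(eC - sa)^2 * L := by
          rw [hlamdef, hτdef]
          ring
        linarith
    _ = Real.exp (-τ ^ 2 * (L:ℝ)) * (L.choose n : ℝ) := by rw [hτdef]; ring
end

section
/- (Repudiation bound, case e <= s_a) Suppose a string of length L contains exactly floor(e * L) marked positions with e <= s_a, and a uniformly random subset of size L/2 is selected (L even). If s_v > s_a, the probability that the selected subset contains more than s_v * L / 2 marked positions is at most exp(-(s_v - e)^2 * L), and hence at most exp(-(s_v - s_a)^2 * L). -/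
open Finset



/-- Key nat identity: `C(N-j, n-j) * N^(j) = C(N,n) * n^(j)` for `j ≤ n ≤ N`. -/
lemma aux_choose_desc : ∀ (j n N : ℕ), j ≤ n → n ≤ N →
    (N - j).choose (n - j) * N.descFactorial j = N.choose n * n.descFactorial j := by
  intro j
  induction j with
  | zero => simp
  | succ j ih =>
    intro n N hjn hnN
    obtain ⟨n, rfl⟩ : ∃ n', n = n' + 1 := ⟨n - 1, by omega⟩
    obtain ⟨N, rfl⟩ : ∃ N', N = N' + 1 := ⟨N - 1, by omega⟩
    have h1 : n + 1 - (j + 1) = n - j := by omega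
    have h2 : N + 1 - (j + 1) = N - j := by omega
    have hjn' : j ≤ n := by omega
    have hnN' : n ≤ N := by omega
    have key : (N + 1) * N.choose n = (N + 1).choose (n + 1) * (n + 1) :=
      Nat.add_one_mul_choose_eq N n
    rw [h1, h2, Nat.succ_descFactorial_succ, Nat.succ_descFactorial_succ]
    calc (N - j).choose (n - j) * ((N + 1) * N.descFactorial j)
        = (N + 1) * ((N - j).choose (n - j) * N.descFactorial j) := by ring
      _ = (N + 1) * (N.choose n * n.descFactorial j) := by rw [ih n N hjn' hnN']
      _ = ((N + 1) * N.choose n) * n.descFactorial j := by ring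
      _ = ((N + 1).choose (n + 1) * (n + 1)) * n.descFactorial j := by rw [key]
      _ = (N + 1).choose (n + 1) * ((n + 1) * n.descFactorial j) := by ring

lemma aux_choose_swap (m n j : ℕ) :
    m.choose j * n.descFactorial j = n.choose j * m.descFactorial j := by
  rw [Nat.descFactorial_eq_factorial_mul_choose, Nat.descFactorial_eq_factorial_mul_choose]
  ring

lemma aux_descFactorial_le (e : ℝ) (m N : ℕ) (he0 : 0 ≤ e) (he1 : e ≤ 1)
    (hm : (m : ℝ) ≤ e * N) : ∀ j : ℕ, j ≤ N →
    (m.descFactorial j : ℝ) ≤ e ^ j * (N.descFactorial j : ℝ) := by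
  intro j
  induction j with
  | zero => simp
  | succ j ih =>
    intro hjN
    have hjN' : j ≤ N := by omega
    have hstep : ((m - j : ℕ) : ℝ) ≤ e * ((N - j : ℕ) : ℝ) := by
      rcases le_or_gt m j with h | h
      · rw [Nat.sub_eq_zero_of_le h]
        simp only [Nat.cast_zero]
        positivity
      · have hmN : m ≤ N := by
          by_contra hc
          push_neg at hc
          have hNm : (N : ℝ) < (m : ℝ) := by exact_mod_cast hc
          nlinarith [mul_nonneg (sub_nonneg.2 he1) (Nat.cast_nonneg (α := ℝ) N)]
        rw [Nat.cast_sub h.le, Nat.cast_sub (by omega : j ≤ N)]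
        have : (j : ℝ) * e ≤ (j : ℝ) := by nlinarith [Nat.cast_nonneg (α := ℝ) j]
        nlinarith
    rw [Nat.descFactorial_succ, Nat.descFactorial_succ]
    push_cast
    calc ((m - j : ℕ) : ℝ) * (m.descFactorial j : ℝ)
        ≤ (e * ((N - j : ℕ) : ℝ)) * (e ^ j * (N.descFactorial j : ℝ)) := by
          apply mul_le_mul hstep (ih hjN') (by positivity) (by positivity)
      _ = e ^ (j + 1) * (((N - j : ℕ) : ℝ) * (N.descFactorial j : ℝ)) := by ring


lemma aux_card_supersets {L : ℕ} (T : Finset (Fin L)) (n : ℕ) (hT : T.card ≤ n) :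
    ((Finset.powersetCard n (univ : Finset (Fin L))).filter (fun S => T ⊆ S)).card
      = (L - T.card).choose (n - T.card) := by
  have hcompl : Tᶜ.card = L - T.card := by
    rw [Finset.card_compl, Fintype.card_fin]
  rw [← hcompl, ← Finset.card_powersetCard]
  apply Finset.card_bij' (fun S (_ : S ∈ _) => S \ T) (fun R (_ : R ∈ _) => R ∪ T)
  · intro S hS
    simp only [Finset.mem_filter, Finset.mem_powersetCard] at hS
    obtain ⟨⟨_, hcard⟩, hTS⟩ := hS
    rw [Finset.mem_powersetCard]
    refine ⟨fun x hx => ?_, by rw [Finset.card_sdiff_of_subset hTS, hcard]⟩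
    simp only [Finset.mem_sdiff] at hx
    simp [Finset.mem_compl, hx.2]
  · intro R hR
    rw [Finset.mem_powersetCard] at hR
    obtain ⟨hRc, hcard⟩ := hR
    have hdisj : Disjoint R T := by
      rw [Finset.disjoint_right]
      intro x hxT hxR
      have := hRc hxR
      simp only [Finset.mem_compl] at this
      exact this hxT
    simp only [Finset.mem_filter, Finset.mem_powersetCard]
    refine ⟨⟨Finset.subset_univ _, ?_⟩, Finset.subset_union_right⟩
    rw [Finset.card_union_of_disjoint hdisj, hcard]
    omega
  · intro S hS
    simp only [Finset.mem_filter] at hS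
    exact Finset.sdiff_union_of_subset hS.2
  · intro R hR
    rw [Finset.mem_powersetCard] at hR
    obtain ⟨hRc, hcard⟩ := hR
    have hdisj : Disjoint R T := by
      rw [Finset.disjoint_right]
      intro x hxT hxR
      have := hRc hxR
      simp only [Finset.mem_compl] at this
      exact this hxT
    exact Finset.union_sdiff_cancel_right hdisj

lemma aux_count_pairs {L : ℕ} (M : Finset (Fin L)) (n j : ℕ) (hj : j ≤ n) :
    ∑ S ∈ Finset.powersetCard n (univ : Finset (Fin L)), ((S ∩ M).card).choose j
      = M.card.choose j * (L - j).choose (n - j) := by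
  have h1 : ∀ S : Finset (Fin L),
      ((S ∩ M).card).choose j = ∑ T ∈ M.powersetCard j, if T ⊆ S then 1 else 0 := by
    intro S
    rw [← Finset.card_powersetCard j (S ∩ M), ← Finset.card_filter]
    congr 1
    ext T
    simp only [Finset.mem_powersetCard, Finset.mem_filter, Finset.subset_inter_iff]
    tauto
  simp only [h1]
  rw [Finset.sum_comm]
  have h2 : ∀ T ∈ M.powersetCard j,
      (∑ S ∈ Finset.powersetCard n (univ : Finset (Fin L)), if T ⊆ S then 1 else 0)
        = (L - j).choose (n - j) := by
    intro T hT
    rw [Finset.mem_powersetCard] at hT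
    rw [← Finset.card_filter]
    rw [aux_card_supersets T n (hT.2 ▸ hj), hT.2]
  rw [Finset.sum_congr rfl h2, Finset.sum_const, Finset.card_powersetCard, smul_eq_mul]

/-- Hoeffding's lemma for a Bernoulli variable. -/
lemma aux_bernoulli_mgf (p s : ℝ) (hp0 : 0 ≤ p) (hp1 : p ≤ 1) (hs : 0 ≤ s) :
    1 - p + p * Real.exp s ≤ Real.exp (p * s + s ^ 2 / 8) := by
  set u : ℝ → ℝ := fun x => 1 - p + p * Real.exp x with hu_def
  have upos : ∀ x, 0 < u x := by
    intro x
    rcases eq_or_lt_of_le hp0 with h | h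
    · simp [hu_def, ← h]
    · have := Real.exp_pos x
      simp only [hu_def]
      nlinarith
  have hne : ∀ x, u x ≠ 0 := fun x => (upos x).ne'
  have hu : ∀ x, HasDerivAt u (p * Real.exp x) x := by
    intro x
    exact ((Real.hasDerivAt_exp x).const_mul p).const_add (1 - p)
  set V : ℝ → ℝ := fun x => p * Real.exp x / u x with hV_def
  have hV : ∀ x, HasDerivAt V (V x - (V x) ^ 2) x := by
    intro x
    have h1 : HasDerivAt (fun y => p * Real.exp y) (p * Real.exp x) x :=
      (Real.hasDerivAt_exp x).const_mul p
    have h2 := h1.div (hu x) (hne x)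
    have key : ∀ A B : ℝ, B ≠ 0 → A / B - (A / B) ^ 2 = (A * B - A * A) / B ^ 2 := by
      intro A B hB
      field_simp
    rw [show V x - V x ^ 2 = _ from key (p * Real.exp x) (u x) (hne x)]
    exact h2
  -- H' is the derivative of H
  set H' : ℝ → ℝ := fun x => p + x / 4 - V x with hH'_def
  have hH' : ∀ x, HasDerivAt H' (1 / 4 - (V x - (V x) ^ 2)) x := by
    intro x
    have h1 : HasDerivAt (fun y : ℝ => p + y / 4) (1 / 4) x := by
      simpa using ((hasDerivAt_id x).div_const 4).const_add p
    exact h1.sub (hV x)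
  have hH'mono : Monotone H' := by
    apply monotone_of_deriv_nonneg
    · intro x
      exact (hH' x).differentiableAt
    · intro x
      rw [(hH' x).deriv]
      nlinarith [sq_nonneg (V x - 1 / 2)]
  have hH'0 : H' 0 = 0 := by
    simp [hH'_def, hV_def, hu_def]
  have hH'nonneg : ∀ x, 0 ≤ x → 0 ≤ H' x := by
    intro x hx
    rw [← hH'0]
    exact hH'mono hx
  set H : ℝ → ℝ := fun x => p * x + x ^ 2 / 8 - Real.log (u x) with hH_def
  have hH : ∀ x, HasDerivAt H (H' x) x := by
    intro x
    have h1 := ((hasDerivAt_id x).const_mul p).add ((hasDerivAt_pow 2 x).div_const 8)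
    have h2 : HasDerivAt (fun y => Real.log (u y)) (p * Real.exp x / u x) x :=
      (hu x).log (hne x)
    have h3 := h1.sub h2
    refine h3.congr_deriv ?_
    show _ = p + x / 4 - p * Real.exp x / u x
    simp only [Nat.cast_ofNat, pow_one, Nat.add_one_sub_one, mul_one]
    ring
  have hHmono : MonotoneOn H (Set.Ici (0 : ℝ)) := by
    apply monotoneOn_of_deriv_nonneg (convex_Ici 0)
    · exact fun x _ => ((hH x).differentiableAt).continuousAt.continuousWithinAt
    · intro x _
      exact ((hH x).differentiableAt).differentiableWithinAt
    · intro x hx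
      rw [interior_Ici] at hx
      rw [(hH x).deriv]
      exact hH'nonneg x hx.le
  have hH0 : H 0 = 0 := by
    simp [hH_def, hu_def]
  have hHs : 0 ≤ H s := by
    rw [← hH0]
    exact hHmono Set.self_mem_Ici hs hs
  have hlog : Real.log (u s) ≤ p * s + s ^ 2 / 8 := by
    simp only [hH_def] at hHs
    linarith
  calc u s = Real.exp (Real.log (u s)) := (Real.exp_log (upos s)).symm
    _ ≤ Real.exp (p * s + s ^ 2 / 8) := Real.exp_le_exp.2 hlog


/-- Repudiation bound, case `e ≤ s_a`. A string of length `L`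
(`L` even) contains exactly `⌊e L⌋` marked positions with `e ≤ s_a`; a
uniformly random subset of size `L/2` is selected. If `s_v > s_a`, the
probability that the selected subset contains more than `s_v L / 2` marked
positions is at most `exp(-(s_v - e)² L)`, and hence at most
`exp(-(s_v - s_a)² L)`. -/
theorem repudiation_upper_tail_bound
    (L : ℕ) (hL : 0 < L) (hLeven : Even L)
    (e sa sv : ℝ) (he0 : 0 ≤ e) (hesa : e ≤ sa) (hsasv : sa < sv) (hsv : sv ≤ 1)
    (M : Finset (Fin L)) (hM : M.card = ⌊e * L⌋₊) :
    (({S : Finset (Fin L) | S.card = L / 2 ∧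
          sv * L / 2 < ((S ∩ M).card : ℝ)}.ncard : ℝ) / (L.choose (L / 2))
        ≤ Real.exp (-(sv - e) ^ 2 * L)) ∧
    (({S : Finset (Fin L) | S.card = L / 2 ∧
          sv * L / 2 < ((S ∩ M).card : ℝ)}.ncard : ℝ) / (L.choose (L / 2))
        ≤ Real.exp (-(sv - sa) ^ 2 * L)) := by
  classical
  set n := L / 2 with hn_def
  have h2n : 2 * n = L := by
    obtain ⟨k, hk⟩ := hLeven
    omega
  have hnL : n ≤ L := Nat.div_le_self L 2
  have hLR : (L : ℝ) = 2 * (n : ℝ) := by exact_mod_cast h2n.symm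
  have hsv0 : 0 < sv := lt_of_le_of_lt (le_trans he0 hesa) hsasv
  have he1 : e ≤ 1 := le_trans hesa (le_of_lt (lt_of_lt_of_le hsasv hsv))
  have hesv : e < sv := lt_of_le_of_lt hesa hsasv
  set a := ⌊sv * (L : ℝ) / 2⌋₊ + 1 with ha_def
  set P := Finset.powersetCard n (univ : Finset (Fin L)) with hP_def
  set bad := P.filter (fun S => a ≤ (S ∩ M).card) with hbad_def
  -- identify the set with the finset `bad`
  have hset : {S : Finset (Fin L) | S.card = L / 2 ∧ sv * L / 2 < ((S ∩ M).card : ℝ)}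
      = (↑bad : Set (Finset (Fin L))) := by
    ext S
    simp only [Set.mem_setOf_eq, hbad_def, Finset.coe_filter, hP_def,
      Finset.mem_powersetCard, Finset.subset_univ, true_and]
    constructor
    · rintro ⟨h1, h2⟩
      refine ⟨h1, ?_⟩
      rw [ha_def, Nat.add_one_le_iff, Nat.floor_lt (by positivity)]
      exact h2
    · rintro ⟨h1, h2⟩
      refine ⟨h1, ?_⟩
      rw [ha_def, Nat.add_one_le_iff, Nat.floor_lt (by positivity)] at h2
      exact h2
  rw [hset, Set.ncard_coe_finset]
  have hCpos : (0 : ℝ) < (L.choose n : ℝ) := by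
    exact_mod_cast Nat.choose_pos hnL
  -- the main estimate
  have key : (bad.card : ℝ) ≤ Real.exp (-(sv - e) ^ 2 * L) * (L.choose n : ℝ) := by
    set s : ℝ := 4 * (sv - e) with hs_def
    have hs0 : 0 ≤ s := by
      rw [hs_def]; linarith
    set lam : ℝ := Real.exp s - 1 with hlam_def
    have hlam0 : 0 ≤ lam := by
      rw [hlam_def]
      linarith [Real.one_le_exp hs0]
    have hone_lam : (1 : ℝ) ≤ 1 + lam := by linarith
    have hmle : (M.card : ℝ) ≤ e * (L : ℝ) := by
      rw [hM]
      exact Nat.floor_le (by positivity)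
    -- the "moment generating function" sum
    set A : ℝ := ∑ S ∈ P, (1 + lam) ^ ((S ∩ M).card) with hA_def
    -- Markov step
    have markov : (bad.card : ℝ) * (1 + lam) ^ a ≤ A := by
      have h1 : ∀ S ∈ bad, (1 + lam) ^ a ≤ (1 + lam) ^ ((S ∩ M).card) := by
        intro S hS
        rw [hbad_def, Finset.mem_filter] at hS
        exact pow_le_pow_right₀ hone_lam hS.2
      calc (bad.card : ℝ) * (1 + lam) ^ a
          = ∑ _S ∈ bad, (1 + lam) ^ a := by rw [Finset.sum_const, nsmul_eq_mul]
        _ ≤ ∑ S ∈ bad, (1 + lam) ^ ((S ∩ M).card) := Finset.sum_le_sum h1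
        _ ≤ A := by
            apply Finset.sum_le_sum_of_subset_of_nonneg (Finset.filter_subset _ _)
            intro S _ _
            positivity
    -- binomial expansion and counting
    have expand : A = ∑ j ∈ Finset.range (n + 1),
        lam ^ j * ((M.card.choose j * (L - j).choose (n - j) : ℕ) : ℝ) := by
      have h1 : ∀ S ∈ P, (1 + lam) ^ ((S ∩ M).card)
          = ∑ j ∈ Finset.range (n + 1), lam ^ j * (((S ∩ M).card.choose j : ℕ) : ℝ) := by
        intro S hS
        have hSc : S.card = n := by
          rw [hP_def, Finset.mem_powersetCard] at hS
          exact hS.2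
        have hc : (S ∩ M).card ≤ n := by
          rw [← hSc]
          exact Finset.card_le_card Finset.inter_subset_left
        have hbig := Finset.sum_subset
          (Finset.range_subset_range.2 (show (S ∩ M).card + 1 ≤ n + 1 by omega))
          (f := fun j => lam ^ j * (1 : ℝ) ^ ((S ∩ M).card - j) * ((S ∩ M).card.choose j : ℝ))
          (by
            intro j hjn hjc
            rw [Finset.mem_range, not_lt] at hjc
            simp [Nat.choose_eq_zero_of_lt (show (S ∩ M).card < j by omega)])
        rw [add_comm (1 : ℝ) lam, add_pow, hbig]
        apply Finset.sum_congr rfl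
        intro j _
        simp
      calc A = ∑ S ∈ P, ∑ j ∈ Finset.range (n + 1),
            lam ^ j * (((S ∩ M).card.choose j : ℕ) : ℝ) := Finset.sum_congr rfl h1
        _ = ∑ j ∈ Finset.range (n + 1), ∑ S ∈ P,
            lam ^ j * (((S ∩ M).card.choose j : ℕ) : ℝ) := Finset.sum_comm
        _ = ∑ j ∈ Finset.range (n + 1),
            lam ^ j * ((M.card.choose j * (L - j).choose (n - j) : ℕ) : ℝ) := by
            apply Finset.sum_congr rfl
            intro j hj
            rw [Finset.mem_range] at hj
            rw [← Finset.mul_sum, ← Nat.cast_sum, hP_def]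
            rw [aux_count_pairs M n j (by omega)]
    -- per-term bound
    have per_j : ∀ j ≤ n, ((M.card.choose j * (L - j).choose (n - j) : ℕ) : ℝ)
        ≤ e ^ j * (n.choose j : ℝ) * (L.choose n : ℝ) := by
      intro j hj
      have hjL : j ≤ L := le_trans hj hnL
      have hD : (0 : ℝ) < (L.descFactorial j : ℝ) := by
        exact_mod_cast Nat.pos_of_ne_zero
          (by rw [Ne, Nat.descFactorial_eq_zero_iff_lt]; omega)
      rw [← mul_le_mul_iff_left₀ hD]
      have id1 : ((L - j).choose (n - j) * L.descFactorial j : ℕ)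
          = L.choose n * n.descFactorial j := aux_choose_desc j n L hj hnL
      have id2 : (M.card.choose j * n.descFactorial j : ℕ)
          = n.choose j * M.card.descFactorial j := aux_choose_swap M.card n j
      have lhs_eq : ((M.card.choose j * (L - j).choose (n - j) : ℕ) : ℝ)
            * (L.descFactorial j : ℝ)
          = (n.choose j : ℝ) * (L.choose n : ℝ) * (M.card.descFactorial j : ℝ) := by
        have : (M.card.choose j * (L - j).choose (n - j)) * L.descFactorial j
            = (n.choose j * M.card.descFactorial j) * L.choose n := by
          calc (M.card.choose j * (L - j).choose (n - j)) * L.descFactorial j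
              = M.card.choose j * ((L - j).choose (n - j) * L.descFactorial j) := by ring
            _ = M.card.choose j * (L.choose n * n.descFactorial j) := by rw [id1]
            _ = (M.card.choose j * n.descFactorial j) * L.choose n := by ring
            _ = (n.choose j * M.card.descFactorial j) * L.choose n := by rw [id2]
        calc ((M.card.choose j * (L - j).choose (n - j) : ℕ) : ℝ) * (L.descFactorial j : ℝ)
            = (((M.card.choose j * (L - j).choose (n - j)) * L.descFactorial j : ℕ) : ℝ) := by
              push_cast; ring
          _ = (((n.choose j * M.card.descFactorial j) * L.choose n : ℕ) : ℝ) := by rw [this]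
          _ = (n.choose j : ℝ) * (L.choose n : ℝ) * (M.card.descFactorial j : ℝ) := by
              push_cast; ring
      rw [lhs_eq]
      have hdesc : (M.card.descFactorial j : ℝ) ≤ e ^ j * (L.descFactorial j : ℝ) :=
        aux_descFactorial_le e M.card L he0 he1 hmle j hjL
      calc (n.choose j : ℝ) * (L.choose n : ℝ) * (M.card.descFactorial j : ℝ)
          ≤ (n.choose j : ℝ) * (L.choose n : ℝ) * (e ^ j * (L.descFactorial j : ℝ)) := by
            apply mul_le_mul_of_nonneg_left hdesc (by positivity)
        _ = e ^ j * (n.choose j : ℝ) * (L.choose n : ℝ) * (L.descFactorial j : ℝ) := by ring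
    -- sum bound
    have hAle : A ≤ (L.choose n : ℝ) * (1 + e * lam) ^ n := by
      rw [expand]
      have h2 : (1 + e * lam) ^ n
          = ∑ j ∈ Finset.range (n + 1), (e * lam) ^ j * ((n.choose j : ℕ) : ℝ) := by
        rw [add_comm (1 : ℝ) (e * lam), add_pow]
        apply Finset.sum_congr rfl
        intro j _
        rw [one_pow, mul_one]
      rw [h2, Finset.mul_sum]
      apply Finset.sum_le_sum
      intro j hj
      rw [Finset.mem_range] at hj
      calc lam ^ j * ((M.card.choose j * (L - j).choose (n - j) : ℕ) : ℝ)
          ≤ lam ^ j * (e ^ j * (n.choose j : ℝ) * (L.choose n : ℝ)) := by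
            apply mul_le_mul_of_nonneg_left (per_j j (by omega)) (by positivity)
        _ = (L.choose n : ℝ) * ((e * lam) ^ j * ((n.choose j : ℕ) : ℝ)) := by
            rw [mul_pow]; ring
    -- Bernoulli MGF bound
    have hbern : (1 + e * lam) ^ n ≤ Real.exp ((n : ℝ) * (e * s + s ^ 2 / 8)) := by
      have h1 : 1 + e * lam = 1 - e + e * Real.exp s := by
        rw [hlam_def]; ring
      have h2 : 1 - e + e * Real.exp s ≤ Real.exp (e * s + s ^ 2 / 8) :=
        aux_bernoulli_mgf e s he0 he1 hs0
      have h3 : (0 : ℝ) ≤ 1 + e * lam := by positivity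
      calc (1 + e * lam) ^ n ≤ (Real.exp (e * s + s ^ 2 / 8)) ^ n := by
            apply pow_le_pow_left₀ h3
            rw [h1]; exact h2
        _ = Real.exp ((n : ℝ) * (e * s + s ^ 2 / 8)) := by
            rw [← Real.exp_nat_mul]
    -- power of (1 + lam)
    have hpow : (1 + lam) ^ a = Real.exp ((a : ℝ) * s) := by
      have : 1 + lam = Real.exp s := by rw [hlam_def]; ring
      rw [this, ← Real.exp_nat_mul]
    have hasv : sv * (n : ℝ) * s ≤ (a : ℝ) * s := by
      apply mul_le_mul_of_nonneg_right _ hs0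
      have h1 : sv * (L : ℝ) / 2 < ((⌊sv * (L : ℝ) / 2⌋₊ : ℝ) + 1) :=
        Nat.lt_floor_add_one _
      have h2 : ((a : ℕ) : ℝ) = (⌊sv * (L : ℝ) / 2⌋₊ : ℝ) + 1 := by
        rw [ha_def]; push_cast; ring
      rw [h2]
      have : sv * (n : ℝ) = sv * (L : ℝ) / 2 := by rw [hLR]; ring
      linarith
    -- combine
    have final1 : (bad.card : ℝ) * Real.exp (sv * (n : ℝ) * s)
        ≤ (L.choose n : ℝ) * Real.exp ((n : ℝ) * (e * s + s ^ 2 / 8)) := by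
      calc (bad.card : ℝ) * Real.exp (sv * (n : ℝ) * s)
          ≤ (bad.card : ℝ) * Real.exp ((a : ℝ) * s) := by
            apply mul_le_mul_of_nonneg_left (Real.exp_le_exp.2 hasv) (by positivity)
        _ = (bad.card : ℝ) * (1 + lam) ^ a := by rw [hpow]
        _ ≤ A := markov
        _ ≤ (L.choose n : ℝ) * (1 + e * lam) ^ n := hAle
        _ ≤ (L.choose n : ℝ) * Real.exp ((n : ℝ) * (e * s + s ^ 2 / 8)) := by
            apply mul_le_mul_of_nonneg_left hbern (by positivity)
    have hexp_pos : (0 : ℝ) < Real.exp (sv * (n : ℝ) * s) := Real.exp_pos _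
    rw [← mul_le_mul_iff_left₀ hexp_pos]
    calc (bad.card : ℝ) * Real.exp (sv * (n : ℝ) * s)
        ≤ (L.choose n : ℝ) * Real.exp ((n : ℝ) * (e * s + s ^ 2 / 8)) := final1
      _ = Real.exp (-(sv - e) ^ 2 * (L : ℝ)) * (L.choose n : ℝ)
            * Real.exp (sv * (n : ℝ) * s) := by
          have hexpo : (n : ℝ) * (e * s + s ^ 2 / 8)
              = -(sv - e) ^ 2 * (L : ℝ) + sv * (n : ℝ) * s := by
            rw [hLR, hs_def]; ring
          rw [hexpo, Real.exp_add]; ring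
  constructor
  · rw [div_le_iff₀ hCpos]
    exact key
  · rw [div_le_iff₀ hCpos]
    calc (bad.card : ℝ) ≤ Real.exp (-(sv - e) ^ 2 * L) * (L.choose n : ℝ) := key
      _ ≤ Real.exp (-(sv - sa) ^ 2 * L) * (L.choose n : ℝ) := by
          apply mul_le_mul_of_nonneg_right _ hCpos.le
          apply Real.exp_le_exp.2
          have h1 : (sv - sa) ^ 2 ≤ (sv - e) ^ 2 := by nlinarith
          have h2 : (0 : ℝ) ≤ (L : ℝ) := Nat.cast_nonneg L
          nlinarith
end

section
/- (Optimal repudiation strategy bound) Let 0 <= s_a < s_v <= 1 and L be an even positive integer. For any choice of error rates e_B, e_C in [0,1] controlled by Alice, the probability of repudiation — Bob accepting (both halves of his key have mismatch rate < s_a) while Charlie rejects (some half has mismatch rate > s_v) under the random symmetrization described below — is at most 2 * exp(-(1/4) * (s_v - s_a)^2 * L). -/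
open Finset

section Auxiliary

variable {α : Type*} [DecidableEq α] [Fintype α]

lemma bernoulli_mgf_bound (q : ℝ) (hq0 : 0 ≤ q) (hq1 : q ≤ 1) (y : ℝ) (hy : 0 ≤ y) :
    1 - q + q * Real.exp y ≤ Real.exp (q * y + y ^ 2 / 8) := by
  set g : ℝ → ℝ := fun x => 1 - q + q * Real.exp x with hgdef
  have hg : ∀ x : ℝ, 0 < g x := by
    intro x
    rcases eq_or_lt_of_le hq0 with h | h
    · simp [hgdef, ← h]
    · have := mul_pos h (Real.exp_pos x)
      simp only [hgdef]
      linarith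
  have hgd : ∀ x : ℝ, HasDerivAt g (q * Real.exp x) x := by
    intro x
    exact ((Real.hasDerivAt_exp x).const_mul q).const_add (1 - q)
  set D1 : ℝ → ℝ := fun x => q + x / 4 - q * Real.exp x / g x with hD1def
  set h : ℝ → ℝ := fun x => q * x + x ^ 2 / 8 - Real.log (g x) with hhdef
  have hhd : ∀ x : ℝ, HasDerivAt h (D1 x) x := by
    intro x
    have hlog : HasDerivAt (fun x => Real.log (g x)) (q * Real.exp x / g x) x :=
      (hgd x).log (hg x).ne'
    have hpoly : HasDerivAt (fun x : ℝ => q * x + x ^ 2 / 8) (q + x / 4) x := by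
      have h1 : HasDerivAt (fun x : ℝ => q * x) q x := by
        simpa using (hasDerivAt_id x).const_mul q
      have h2 : HasDerivAt (fun x : ℝ => x ^ 2 / 8) (x / 4) x := by
        have := (hasDerivAt_pow 2 x).div_const 8
        exact this.congr_deriv (by ring)
      exact h1.add h2
    exact hpoly.sub hlog
  have hD1d : ∀ x : ℝ, HasDerivAt D1
      (1 / 4 - (q * Real.exp x * g x - q * Real.exp x * (q * Real.exp x)) / (g x) ^ 2) x := by
    intro x
    have hnum : HasDerivAt (fun x => q * Real.exp x) (q * Real.exp x) x :=
      (Real.hasDerivAt_exp x).const_mul q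
    have hdiv := hnum.div (hgd x) (hg x).ne'
    have hlin : HasDerivAt (fun x : ℝ => q + x / 4) (1 / 4) x := by
      simpa using ((hasDerivAt_id x).div_const 4).const_add q
    exact hlin.sub hdiv
  have hD2 : ∀ x : ℝ, 0 ≤ 1 / 4 - (q * Real.exp x * g x - q * Real.exp x * (q * Real.exp x)) / (g x) ^ 2 := by
    intro x
    rw [sub_nonneg, div_le_iff₀ (pow_pos (hg x) 2)]
    have hex := Real.exp_pos x
    have hsq := sq_nonneg ((1 - q) - q * Real.exp x)
    simp only [hgdef]
    nlinarith [mul_nonneg hq0 hex.le]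
  have hD1mono : Monotone D1 := by
    apply monotone_of_deriv_nonneg
    · exact fun x => (hD1d x).differentiableAt
    · intro x
      rw [(hD1d x).deriv]
      exact hD2 x
  have hD10 : D1 0 = 0 := by
    simp only [hD1def, hgdef, Real.exp_zero, mul_one]
    have : 1 - q + q = 1 := by ring
    rw [this]
    ring
  have hD1nonneg : ∀ x ∈ interior (Set.Ici (0:ℝ)), 0 ≤ deriv h x := by
    intro x hx
    rw [interior_Ici] at hx
    rw [(hhd x).deriv]
    calc (0:ℝ) = D1 0 := hD10.symm
    _ ≤ D1 x := hD1mono (le_of_lt hx)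
  have hhmono : MonotoneOn h (Set.Ici 0) := by
    apply monotoneOn_of_deriv_nonneg (convex_Ici 0)
    · exact (Continuous.continuousOn (continuous_iff_continuousAt.mpr
        fun x => (hhd x).differentiableAt.continuousAt))
    · exact fun x hx => ((hhd x).differentiableAt).differentiableWithinAt
    · exact hD1nonneg
  have hh0 : h 0 = 0 := by
    simp only [hhdef, hgdef, Real.exp_zero, mul_one, mul_zero]
    norm_num
  have hhy : 0 ≤ h y := by
    calc (0:ℝ) = h 0 := hh0.symm
    _ ≤ h y := hhmono Set.self_mem_Ici hy hy
  have hlog : Real.log (g y) ≤ q * y + y ^ 2 / 8 := by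
    simp only [hhdef] at hhy
    linarith
  have := (Real.log_le_iff_le_exp (hg y)).mp hlog
  simpa [hgdef] using this

lemma sum_powersetCard_insert (n : ℕ) (f : Finset α → ℝ) :
    ((n : ℝ) + 1) * ∑ S ∈ powersetCard (n + 1) (univ : Finset α), f S
      = ∑ S ∈ powersetCard n (univ : Finset α), ∑ x ∈ Sᶜ, f (insert x S) := by
  have key : ∑ S ∈ powersetCard (n+1) (univ : Finset α), ∑ _x ∈ S, f S
      = ∑ S ∈ powersetCard n (univ : Finset α), ∑ x ∈ Sᶜ, f (insert x S) := by
    rw [Finset.sum_sigma', Finset.sum_sigma']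
    apply Finset.sum_nbij' (i := fun p => (⟨p.1.erase p.2, p.2⟩ : Σ _ : Finset α, α))
      (j := fun p => (⟨insert p.2 p.1, p.2⟩ : Σ _ : Finset α, α))
    · rintro ⟨S, x⟩ hp
      simp only [Finset.mem_sigma, mem_powersetCard] at hp ⊢
      obtain ⟨⟨-, hcard⟩, hx⟩ := hp
      refine ⟨⟨subset_univ _, ?_⟩, ?_⟩
      · rw [card_erase_of_mem hx, hcard]; rfl
      · simp
    · rintro ⟨S, x⟩ hp
      simp only [Finset.mem_sigma, mem_powersetCard, mem_compl] at hp ⊢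
      obtain ⟨⟨-, hcard⟩, hx⟩ := hp
      exact ⟨⟨subset_univ _, by rw [card_insert_of_notMem hx, hcard]⟩, mem_insert_self _ _⟩
    · rintro ⟨S, x⟩ hp
      simp only [Finset.mem_sigma, mem_powersetCard] at hp
      simp [insert_erase hp.2]
    · rintro ⟨S, x⟩ hp
      simp only [Finset.mem_sigma, mem_powersetCard, mem_compl] at hp
      simp [erase_insert hp.2]
    · rintro ⟨S, x⟩ hp
      simp only [Finset.mem_sigma, mem_powersetCard] at hp
      simp [insert_erase hp.2]
  rw [← key, Finset.mul_sum]
  refine Finset.sum_congr rfl fun S hS => ?_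
  rw [mem_powersetCard] at hS
  rw [Finset.sum_const, hS.2, nsmul_eq_mul]
  push_cast
  ring

lemma card_filter_mem (n : ℕ) (x : α) :
    ((powersetCard (n + 1) (univ : Finset α)).filter (fun S => x ∈ S)).card
      = (Fintype.card α - 1).choose n := by
  have hcompl : (({x} : Finset α)ᶜ).card = Fintype.card α - 1 := by
    rw [card_compl, card_singleton]
  rw [← hcompl, ← Finset.card_powersetCard n (({x} : Finset α)ᶜ)]
  apply Finset.card_nbij' (i := fun S => S.erase x) (j := fun T => insert x T)
  · intro S hS
    simp only [Finset.mem_coe, Finset.mem_filter, mem_powersetCard] at hS ⊢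
    obtain ⟨⟨-, hcard⟩, hx⟩ := hS
    refine ⟨?_, by rw [card_erase_of_mem hx, hcard]; rfl⟩
    intro y hy
    simp only [mem_erase] at hy
    simp [hy.1]
  · intro T hT
    simp only [Finset.mem_coe, Finset.mem_filter, mem_powersetCard] at hT ⊢
    obtain ⟨hsub, hcard⟩ := hT
    have hx : x ∉ T := fun h => by simpa using hsub h
    exact ⟨⟨subset_univ _, by rw [card_insert_of_notMem hx, hcard]⟩, mem_insert_self _ _⟩
  · intro S hS
    simp only [Finset.mem_coe, Finset.mem_filter] at hS
    exact insert_erase hS.2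
  · intro T hT
    simp only [Finset.mem_coe, mem_powersetCard] at hT
    have hx : x ∉ T := fun h => by simpa using hT.1 h
    exact erase_insert hx

lemma mean_lemma (B : Finset α) (n : ℕ) :
    (Fintype.card α : ℝ) * ∑ S ∈ powersetCard n (univ : Finset α), ((B ∩ S).card : ℝ)
      = n * B.card * ((Fintype.card α).choose n) := by
  cases n with
  | zero => simp [Finset.powersetCard_zero]
  | succ n =>
    rcases Nat.eq_zero_or_pos (Fintype.card α) with hN | hN
    · have : (univ : Finset α) = ∅ := Finset.card_eq_zero.mp (by simpa using hN)
      rw [hN]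
      have he : powersetCard (n+1) (univ : Finset α) = ∅ :=
        Finset.powersetCard_eq_empty.mpr (by simp [this])
      simp [he]
    · have h1 : ∀ S : Finset α, ((B ∩ S).card : ℝ) = ∑ x ∈ B, if x ∈ S then (1:ℝ) else 0 := by
        intro S
        rw [← Finset.filter_mem_eq_inter, Finset.card_filter]
        push_cast
        rfl
      rw [Finset.sum_congr rfl fun S _ => h1 S, Finset.sum_comm]
      have h2 : ∀ x : α, (∑ S ∈ powersetCard (n+1) (univ : Finset α),
          if x ∈ S then (1:ℝ) else 0) = ((Fintype.card α - 1).choose n : ℝ) := by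
        intro x
        rw [Finset.sum_boole, card_filter_mem n x]
      rw [Finset.sum_congr rfl fun x _ => h2 x, Finset.sum_const, nsmul_eq_mul]
      have hid : Fintype.card α * (Fintype.card α - 1).choose n
          = (Fintype.card α).choose (n+1) * (n+1) := by
        obtain ⟨N, hNeq⟩ := Nat.exists_eq_succ_of_ne_zero hN.ne'
        rw [hNeq]
        simpa using Nat.add_one_mul_choose_eq N n
      have := congrArg (fun k : ℕ => (k : ℝ)) hid
      push_cast at this ⊢
      nlinarith [this]

lemma chvatal (B : Finset α) (t : ℝ) (ht : 1 ≤ t) :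
    ∀ n, n ≤ Fintype.card α →
    ∑ S ∈ powersetCard n (univ : Finset α), t ^ (B ∩ S).card
      ≤ ((Fintype.card α).choose n : ℝ)
        * (1 - B.card / Fintype.card α + B.card / Fintype.card α * t) ^ n := by
  intro n
  induction n with
  | zero => intro _; simp
  | succ n ih =>
    intro hn1
    have hn : n ≤ Fintype.card α := by omega
    have hN : 0 < Fintype.card α := by omega
    have ihn := ih hn
    set N : ℕ := Fintype.card α with hNdef
    set b : ℕ := B.card with hbdef
    set p : ℝ := (b : ℝ) / N with hpdef
    set c : ℝ := 1 - p + p * t with hcdef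
    have hb : (b:ℕ) ≤ N := by rw [hbdef, hNdef]; exact B.card_le_univ
    have hp0 : 0 ≤ p := by positivity
    have hp1 : p ≤ 1 := by
      rw [hpdef, div_le_one (by exact_mod_cast hN)]
      exact_mod_cast hb
    have hc1 : (1:ℝ) ≤ c := by rw [hcdef]; nlinarith
    have hc0 : (0:ℝ) ≤ c := by linarith
    have ht0 : (0:ℝ) < t := by linarith
    -- inner sum computation
    have hinner : ∀ S ∈ powersetCard n (univ : Finset α),
        (∑ x ∈ Sᶜ, t ^ (B ∩ insert x S).card)
          = t ^ (B ∩ S).card * (((N : ℝ) - n) + (t - 1) * ((b : ℝ) - ((B ∩ S).card : ℝ))) := by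
      intro S hS
      rw [mem_powersetCard] at hS
      have hterm : ∀ x ∈ Sᶜ, t ^ (B ∩ insert x S).card
          = if x ∈ B then t ^ ((B ∩ S).card + 1) else t ^ (B ∩ S).card := by
        intro x hx
        rw [mem_compl] at hx
        by_cases hxB : x ∈ B
        · rw [if_pos hxB, Finset.inter_insert_of_mem hxB,
            card_insert_of_notMem (fun h => hx (Finset.mem_of_mem_inter_right h))]
        · rw [if_neg hxB, Finset.inter_insert_of_notMem hxB]
      rw [Finset.sum_congr rfl hterm, Finset.sum_ite, Finset.sum_const, Finset.sum_const,
        nsmul_eq_mul, nsmul_eq_mul]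
      have e1 : (Sᶜ.filter (fun x => x ∈ B)).card = (B \ S).card := by
        congr 1
        ext y
        simp only [Finset.mem_filter, mem_compl, mem_sdiff]
        tauto
      have e2 : ((B ∩ S).card : ℝ) + ((B \ S).card : ℝ) = (b : ℝ) := by
        exact_mod_cast congrArg (fun k : ℕ => (k : ℝ)) (Finset.card_inter_add_card_sdiff B S)
      have e3 : ((Sᶜ.filter (fun x => x ∈ B)).card : ℝ)
          + ((Sᶜ.filter (fun x => ¬ x ∈ B)).card : ℝ) = (N : ℝ) - n := by
        have h4 := Finset.card_filter_add_card_filter_not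
          (s := Sᶜ) (p := fun x => x ∈ B)
        have h5 : (Sᶜ).card = N - n := by
          rw [Finset.card_compl, hS.2]
        have h6 : ((N - n : ℕ) : ℝ) = (N:ℝ) - n := by
          rw [Nat.cast_sub hn]
        rw [← h6, ← h5, ← h4]
        push_cast
        ring
      rw [e1] at *
      rw [pow_succ]
      linear_combination (t ^ (B ∩ S).card * (t - 1)) * e2 + (t ^ (B ∩ S).card) * e3
    -- Chebyshev's sum inequality
    have hanti : AntivaryOn (fun S => t ^ (B ∩ S).card)
        (fun S => ((N : ℝ) - n) + (t - 1) * ((b:ℝ) - ((B ∩ S).card : ℝ)))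
        ↑(powersetCard n (univ : Finset α)) := by
      intro S _ S' _ hlt
      simp only at hlt ⊢
      have hmm : (B ∩ S').card ≤ (B ∩ S).card := by
        by_contra hcon
        push_neg at hcon
        have hc' : ((B ∩ S).card : ℝ) + 1 ≤ ((B ∩ S').card : ℝ) := by exact_mod_cast hcon
        nlinarith
      exact pow_le_pow_right₀ ht hmm
    have cheb := hanti.card_mul_sum_le_sum_mul_sum
    have hcard : ((powersetCard n (univ : Finset α)).card : ℝ) = (N.choose n : ℝ) := by
      rw [Finset.card_powersetCard, Finset.card_univ]
    rw [hcard] at cheb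
    have hkey : ((n : ℝ) + 1) * ∑ S ∈ powersetCard (n+1) (univ : Finset α), t ^ (B ∩ S).card
        = ∑ S ∈ powersetCard n (univ : Finset α),
            t ^ (B ∩ S).card * (((N : ℝ) - n) + (t - 1) * ((b:ℝ) - ((B ∩ S).card : ℝ))) := by
      rw [sum_powersetCard_insert n (fun S => t ^ (B ∩ S).card)]
      exact Finset.sum_congr rfl hinner
    have hsumg : ∑ S ∈ powersetCard n (univ : Finset α),
        (((N : ℝ) - n) + (t - 1) * ((b:ℝ) - ((B ∩ S).card : ℝ)))
        = (N.choose n : ℝ) * (((N:ℝ) - n) * c) := by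
      have hm := mean_lemma B n
      rw [Finset.sum_add_distrib, Finset.sum_const, nsmul_eq_mul, hcard, ← Finset.mul_sum,
        Finset.sum_sub_distrib, Finset.sum_const, nsmul_eq_mul, hcard]
      rw [hcdef, hpdef]
      have hNne : (N:ℝ) ≠ 0 := by positivity
      field_simp
      linear_combination (-(t-1)) * hm
    rw [hsumg] at cheb
    -- combine
    have hCpos : (0:ℝ) < (N.choose n : ℝ) := by exact_mod_cast Nat.choose_pos hn
    have hNn : (n:ℝ) ≤ (N:ℝ) := by exact_mod_cast hn
    have hfac : (0:ℝ) ≤ ((N:ℝ) - n) * c := mul_nonneg (by linarith) hc0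
    have step2 : ((n : ℝ) + 1) * ∑ S ∈ powersetCard (n+1) (univ : Finset α), t ^ (B ∩ S).card
        ≤ (∑ S ∈ powersetCard n (univ : Finset α), t ^ (B ∩ S).card) * (((N:ℝ) - n) * c) := by
      apply le_of_mul_le_mul_left _ hCpos
      calc (N.choose n : ℝ) * (((n : ℝ) + 1) * ∑ S ∈ powersetCard (n+1) (univ : Finset α), t ^ (B ∩ S).card)
          = (N.choose n : ℝ) * ∑ S ∈ powersetCard n (univ : Finset α),
              t ^ (B ∩ S).card * (((N : ℝ) - n) + (t - 1) * ((b:ℝ) - ((B ∩ S).card : ℝ))) := by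
            rw [hkey]
        _ ≤ (∑ S ∈ powersetCard n (univ : Finset α), t ^ (B ∩ S).card) * ((N.choose n : ℝ) * (((N:ℝ) - n) * c)) :=
            cheb
        _ = (N.choose n : ℝ) * ((∑ S ∈ powersetCard n (univ : Finset α), t ^ (B ∩ S).card) * (((N:ℝ) - n) * c)) := by
            ring
    have step3 : ((n : ℝ) + 1) * ∑ S ∈ powersetCard (n+1) (univ : Finset α), t ^ (B ∩ S).card
        ≤ ((N.choose n : ℝ) * c ^ n) * (((N:ℝ) - n) * c) :=
      le_trans step2 (mul_le_mul_of_nonneg_right ihn hfac)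
    have hchoose : ((N.choose (n+1) : ℝ)) * ((n:ℝ) + 1) = (N.choose n : ℝ) * ((N:ℝ) - n) := by
      have := Nat.choose_succ_right_eq N n
      have hcast := congrArg (fun k : ℕ => (k : ℝ)) this
      push_cast [Nat.cast_sub hn] at hcast
      linarith [hcast]
    have hn1pos : (0:ℝ) < (n:ℝ) + 1 := by positivity
    apply le_of_mul_le_mul_left _ hn1pos
    calc ((n:ℝ)+1) * ∑ S ∈ powersetCard (n+1) (univ : Finset α), t ^ (B ∩ S).card
        ≤ ((N.choose n : ℝ) * c ^ n) * (((N:ℝ) - n) * c) := step3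
      _ = ((N.choose n : ℝ) * ((N:ℝ) - n)) * c ^ (n+1) := by ring
      _ = ((N.choose (n+1) : ℝ)) * ((n:ℝ) + 1) * c ^ (n+1) := by rw [hchoose]
      _ = ((n:ℝ)+1) * ((N.choose (n+1) : ℝ) * c ^ (n+1)) := by ring

lemma tail_bound (B : Finset α) (n : ℕ) (hn : n ≤ Fintype.card α) (hN : 0 < Fintype.card α)
    (r lam : ℝ) (hlam : 0 ≤ lam) :
    (((powersetCard n (univ : Finset α)).filter
        (fun S => r ≤ ((B ∩ S).card : ℝ))).card : ℝ)
      ≤ ((Fintype.card α).choose n : ℝ)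
          * Real.exp (n * (((B.card : ℝ) / (Fintype.card α : ℝ)) * lam + lam ^ 2 / 8) - lam * r) := by
  set q : ℝ := (B.card : ℝ) / (Fintype.card α : ℝ) with hqdef
  have hq0 : 0 ≤ q := by positivity
  have hq1 : q ≤ 1 := by
    rw [hqdef, div_le_one (by exact_mod_cast hN)]
    exact_mod_cast B.card_le_univ
  have ht : 1 ≤ Real.exp lam := Real.one_le_exp hlam
  have hstep1 : (((powersetCard n (univ : Finset α)).filter
        (fun S => r ≤ ((B ∩ S).card : ℝ))).card : ℝ) * Real.exp (lam * r)
      ≤ ∑ S ∈ powersetCard n (univ : Finset α), Real.exp lam ^ (B ∩ S).card := by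
    calc (((powersetCard n (univ : Finset α)).filter
        (fun S => r ≤ ((B ∩ S).card : ℝ))).card : ℝ) * Real.exp (lam * r)
        = ∑ _S ∈ (powersetCard n (univ : Finset α)).filter
            (fun S => r ≤ ((B ∩ S).card : ℝ)), Real.exp (lam * r) := by
          rw [Finset.sum_const, nsmul_eq_mul]
      _ ≤ ∑ S ∈ (powersetCard n (univ : Finset α)).filter
            (fun S => r ≤ ((B ∩ S).card : ℝ)), Real.exp lam ^ (B ∩ S).card := by
          apply Finset.sum_le_sum
          intro S hS
          rw [Finset.mem_filter] at hS
          rw [← Real.exp_nat_mul]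
          apply Real.exp_le_exp.mpr
          have := mul_le_mul_of_nonneg_left hS.2 hlam
          linarith
      _ ≤ ∑ S ∈ powersetCard n (univ : Finset α), Real.exp lam ^ (B ∩ S).card := by
          apply Finset.sum_le_sum_of_subset_of_nonneg (Finset.filter_subset _ _)
          intro S _ _
          positivity
  have hstep2 := chvatal B (Real.exp lam) ht n hn
  have hbase : (0:ℝ) ≤ 1 - q + q * Real.exp lam := by nlinarith
  have hstep3 : (1 - q + q * Real.exp lam) ^ n ≤ Real.exp (q * lam + lam ^ 2 / 8) ^ n :=
    pow_le_pow_left₀ hbase (bernoulli_mgf_bound q hq0 hq1 lam hlam) n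
  have hCpos : (0:ℝ) ≤ ((Fintype.card α).choose n : ℝ) := by positivity
  have hstep4 : (((powersetCard n (univ : Finset α)).filter
        (fun S => r ≤ ((B ∩ S).card : ℝ))).card : ℝ) * Real.exp (lam * r)
      ≤ ((Fintype.card α).choose n : ℝ) * Real.exp ((n : ℝ) * (q * lam + lam ^ 2 / 8)) := by
    calc _ ≤ ∑ S ∈ powersetCard n (univ : Finset α), Real.exp lam ^ (B ∩ S).card := hstep1
      _ ≤ ((Fintype.card α).choose n : ℝ) * (1 - q + q * Real.exp lam) ^ n := hstep2
      _ ≤ ((Fintype.card α).choose n : ℝ) * Real.exp (q * lam + lam ^ 2 / 8) ^ n :=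
          mul_le_mul_of_nonneg_left hstep3 hCpos
      _ = ((Fintype.card α).choose n : ℝ) * Real.exp ((n : ℝ) * (q * lam + lam ^ 2 / 8)) := by
          rw [← Real.exp_nat_mul]
  have hepos := Real.exp_pos (lam * r)
  rw [← mul_le_mul_iff_of_pos_right hepos]
  calc (((powersetCard n (univ : Finset α)).filter
        (fun S => r ≤ ((B ∩ S).card : ℝ))).card : ℝ) * Real.exp (lam * r)
      ≤ ((Fintype.card α).choose n : ℝ) * Real.exp ((n : ℝ) * (q * lam + lam ^ 2 / 8)) := hstep4
    _ = ((Fintype.card α).choose n : ℝ)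
        * Real.exp ((n : ℝ) * (q * lam + lam ^ 2 / 8) - lam * r) * Real.exp (lam * r) := by
        rw [mul_assoc, ← Real.exp_add]
        ring_nf

lemma upper_tail_mean (D : Finset α) (n : ℕ) (hhalf : Fintype.card α = 2 * n) (hn : 0 < n)
    (δ : ℝ) (hδ : 0 < δ) :
    (((powersetCard n (univ : Finset α)).filter
        (fun S => (D.card : ℝ) / 2 + δ ≤ ((D ∩ S).card : ℝ))).card : ℝ)
      ≤ ((Fintype.card α).choose n : ℝ) * Real.exp (-(2 * δ ^ 2 / n)) := by
  have hN : 0 < Fintype.card α := by omega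
  have hle : n ≤ Fintype.card α := by omega
  have hlam : 0 ≤ 4 * δ / n := by positivity
  refine le_trans (tail_bound D n hle hN ((D.card : ℝ) / 2 + δ) (4 * δ / n) hlam) ?_
  apply mul_le_mul_of_nonneg_left _ (by positivity)
  rw [Real.exp_le_exp]
  apply le_of_eq
  have hD2 : ((D.card : ℝ) / (Fintype.card α : ℝ)) * n = (D.card : ℝ) / 2 := by
    rw [hhalf]
    push_cast
    field_simp
  have hnne : (n:ℝ) ≠ 0 := by positivity
  have hNne : ((Fintype.card α : ℕ) : ℝ) ≠ 0 := by positivity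
  rw [hhalf]
  push_cast
  field_simp
  ring

end Auxiliary

/-- Optimal repudiation strategy bound. Alice's declaration has
mismatch sets `B`, `C` (arbitrary, i.e. any error rates `e_B`, `e_C` she may
choose) with Bob's and Charlie's `L`-bit keys. Bob and Charlie each keep a
uniformly random half (`L/2` positions, sets `S_B`, `S_C`) of their own key and
forward the other half. Bob accepts iff both his halves (his kept positions
`S_B` and the positions `S_Cᶜ` forwarded by Charlie) have fewer than
`s_a L/2` mismatches; Charlie rejects iff some of his halves (`S_C` or `S_Bᶜ`)
has more than `s_v L/2` mismatches. The probability of repudiation (Bob accepts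
and Charlie rejects) is at most `2 exp(-(1/4)(s_v - s_a)² L)`. -/
theorem repudiation_probability_bound
    (L : ℕ) (hL : 0 < L) (hLeven : Even L)
    (sa sv : ℝ) (hsa0 : 0 ≤ sa) (hsasv : sa < sv) (hsv1 : sv ≤ 1)
    (B C : Finset (Fin L)) :
    (({p : Finset (Fin L) × Finset (Fin L) |
          p.1.card = L / 2 ∧ p.2.card = L / 2 ∧
          -- Bob accepts both halves of his key
          (((B ∩ p.1).card : ℝ) < sa * L / 2) ∧
          (((C ∩ p.2ᶜ).card : ℝ) < sa * L / 2) ∧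
          -- Charlie rejects some half of his key
          ((sv * L / 2 < ((C ∩ p.2).card : ℝ)) ∨
            (sv * L / 2 < ((B ∩ p.1ᶜ).card : ℝ)))}.ncard : ℝ)
        / ((L.choose (L / 2) : ℝ) * (L.choose (L / 2) : ℝ))
      ≤ 2 * Real.exp (-(1 / 4) * (sv - sa) ^ 2 * L)) := by
  set n : ℕ := L / 2 with hndef
  set E : Set (Finset (Fin L) × Finset (Fin L)) := {p : Finset (Fin L) × Finset (Fin L) |
          p.1.card = n ∧ p.2.card = n ∧
          (((B ∩ p.1).card : ℝ) < sa * L / 2) ∧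
          (((C ∩ p.2ᶜ).card : ℝ) < sa * L / 2) ∧
          ((sv * L / 2 < ((C ∩ p.2).card : ℝ)) ∨
            (sv * L / 2 < ((B ∩ p.1ᶜ).card : ℝ)))} with hEdef
  have hL2 : L = 2 * n := by
    obtain ⟨k, hk⟩ := hLeven
    omega
  have hn0 : 0 < n := by omega
  have hLpos : (0:ℝ) < (L:ℝ) := by exact_mod_cast hL
  have hnL : (n : ℝ) = (L : ℝ) / 2 := by
    rw [hL2]; push_cast; ring
  have hcardfin : Fintype.card (Fin L) = 2 * n := by
    rw [Fintype.card_fin, hL2]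
  have hsvsa : 0 < sv - sa := by linarith
  set δ : ℝ := (sv - sa) * L / 4 with hδdef
  have hδ : 0 < δ := by rw [hδdef]; positivity
  set P : Finset (Finset (Fin L)) := powersetCard n (univ : Finset (Fin L)) with hPdef
  set A1 : Finset (Finset (Fin L)) :=
    P.filter (fun S => ((Bᶜ.card : ℝ)) / 2 + δ ≤ ((Bᶜ ∩ S).card : ℝ)) with hA1def
  set A2 : Finset (Finset (Fin L)) :=
    P.filter (fun T => ((C.card : ℝ)) / 2 + δ ≤ ((C ∩ T).card : ℝ)) with hA2def
  have hBL : (B.card : ℝ) ≤ (L:ℝ) := by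
    have h : B.card ≤ L := by simpa using B.card_le_univ
    exact_mod_cast h
  have hsub : E ⊆ (↑(A1 ×ˢ P ∪ P ×ˢ A2) : Set (Finset (Fin L) × Finset (Fin L))) := by
    rintro ⟨S, T⟩ ⟨h1, h2, h3, h4, h5⟩
    have hSP : S ∈ P := by
      rw [hPdef, mem_powersetCard]
      exact ⟨subset_univ _, h1⟩
    have hTP : T ∈ P := by
      rw [hPdef, mem_powersetCard]
      exact ⟨subset_univ _, h2⟩
    simp only [Finset.coe_union, Set.mem_union, Finset.mem_coe, Finset.mem_product]
    rcases h5 with h5 | h5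
    · right
      refine ⟨hSP, ?_⟩
      rw [hA2def, Finset.mem_filter]
      refine ⟨hTP, ?_⟩
      have hCT : C ∩ Tᶜ = C \ T := by
        ext y; simp [mem_sdiff, mem_compl, mem_inter]
      have e : ((C ∩ T).card : ℝ) + ((C \ T).card : ℝ) = (C.card : ℝ) := by
        exact_mod_cast congrArg (fun k : ℕ => (k:ℝ)) (Finset.card_inter_add_card_sdiff C T)
      rw [hCT] at h4
      rw [hδdef]
      linarith
    · left
      refine ⟨?_, hTP⟩
      rw [hA1def, Finset.mem_filter]
      refine ⟨hSP, ?_⟩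
      have hBS : B ∩ Sᶜ = B \ S := by
        ext y; simp [mem_sdiff, mem_compl, mem_inter]
      have e1 : ((B ∩ S).card : ℝ) + ((B \ S).card : ℝ) = (B.card : ℝ) := by
        exact_mod_cast congrArg (fun k : ℕ => (k:ℝ)) (Finset.card_inter_add_card_sdiff B S)
      have hBcS : Bᶜ ∩ S = S \ B := by
        ext y; simp only [mem_sdiff, mem_compl, mem_inter]; tauto
      have e2 : ((B ∩ S).card : ℝ) + ((S \ B).card : ℝ) = (n : ℝ) := by
        have h := Finset.card_inter_add_card_sdiff S B
        rw [Finset.inter_comm, h1] at h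
        exact_mod_cast congrArg (fun k : ℕ => (k:ℝ)) h
      have e3 : ((Bᶜ.card : ℕ) : ℝ) = (L : ℝ) - (B.card : ℝ) := by
        rw [Finset.card_compl, Fintype.card_fin]
        have hBn : B.card ≤ L := by exact_mod_cast hBL
        rw [Nat.cast_sub hBn]
      rw [hBS] at h5
      rw [hBcS, e3, hδdef]
      rw [hδdef] at *
      linarith [hnL]
  have hA1b : ((A1.card : ℕ) : ℝ) ≤ ((L.choose n : ℕ) : ℝ) * Real.exp (-(2 * δ ^ 2 / n)) := by
    have h := upper_tail_mean Bᶜ n hcardfin hn0 δ hδ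
    rw [Fintype.card_fin] at h
    exact h
  have hA2b : ((A2.card : ℕ) : ℝ) ≤ ((L.choose n : ℕ) : ℝ) * Real.exp (-(2 * δ ^ 2 / n)) := by
    have h := upper_tail_mean C n hcardfin hn0 δ hδ
    rw [Fintype.card_fin] at h
    exact h
  have hPcard : P.card = L.choose n := by
    rw [hPdef, Finset.card_powersetCard, Finset.card_univ, Fintype.card_fin]
  have hexp : Real.exp (-(2 * δ ^ 2 / (n:ℝ))) = Real.exp (-(1/4) * (sv - sa) ^ 2 * (L:ℝ)) := by
    congr 1
    rw [hδdef, hnL]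
    field_simp
    ring
  have hCpos : (0:ℝ) < ((L.choose n : ℕ) : ℝ) := by
    exact_mod_cast Nat.choose_pos (by omega : n ≤ L)
  have hncard : ((E.ncard : ℕ) : ℝ)
      ≤ (A1.card : ℝ) * ((L.choose n : ℕ) : ℝ) + ((L.choose n : ℕ) : ℝ) * (A2.card : ℝ) := by
    have step1 := Set.ncard_le_ncard hsub (Finset.finite_toSet _)
    rw [Set.ncard_coe_finset] at step1
    have step2 : (A1 ×ˢ P ∪ P ×ˢ A2).card ≤ A1.card * P.card + P.card * A2.card := by
      refine le_trans (Finset.card_union_le _ _) (le_of_eq ?_)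
      rw [Finset.card_product, Finset.card_product]
    have h := le_trans step1 step2
    rw [hPcard] at h
    exact_mod_cast h
  rw [div_le_iff₀ (by positivity)]
  calc ((E.ncard : ℕ) : ℝ)
      ≤ (A1.card : ℝ) * ((L.choose n : ℕ) : ℝ) + ((L.choose n : ℕ) : ℝ) * (A2.card : ℝ) := hncard
    _ ≤ (((L.choose n : ℕ) : ℝ) * Real.exp (-(2 * δ ^ 2 / n))) * ((L.choose n : ℕ) : ℝ)
        + ((L.choose n : ℕ) : ℝ) * (((L.choose n : ℕ) : ℝ) * Real.exp (-(2 * δ ^ 2 / n))) := by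
        have g1 := mul_le_mul_of_nonneg_right hA1b hCpos.le
        have g2 := mul_le_mul_of_nonneg_left hA2b hCpos.le
        linarith
    _ = 2 * Real.exp (-(2 * δ ^ 2 / n)) * (((L.choose n : ℕ) : ℝ) * ((L.choose n : ℕ) : ℝ)) := by
        ring
    _ = 2 * Real.exp (-(1/4) * (sv - sa) ^ 2 * (L:ℝ)) * (((L.choose n : ℕ) : ℝ) * ((L.choose n : ℕ) : ℝ)) := by
        rw [hexp]
end

section
/- (Classicality of optimal smoothing) Let tau_{XF} be a classical (diagonal in a fixed product basis) bipartite density operator. Then for any state tau'_{XF} in the epsilon-ball (trace distance) around tau_{XF} and any unit-trace state sigma'_F, there exist a classical state tau-bar_{XF} in the epsilon-ball around tau_{XF} and a classical unit-trace state sigma_F such that H_min(tau-bar_{XF} | sigma_F) >= H_min(tau'_{XF} | sigma'_F). Consequently the smooth min-entropy H_min^eps(X|F)_tau is achieved by classical states. -/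
open Matrix ComplexOrder Kronecker

/-- The trace norm `‖A‖₁ = tr √(AᴴA)` of a complex matrix. -/
noncomputable def traceNorm {n : Type*} [Fintype n] [DecidableEq n]
    (A : Matrix n n ℂ) : ℝ :=
  ((Matrix.posSemidef_conjTranspose_mul_self A).1.eigenvectorUnitary.1 *
    diagonal ((RCLike.ofReal : ℝ → ℂ) ∘ (√·) ∘ (Matrix.posSemidef_conjTranspose_mul_self A).1.eigenvalues) *
    (star (Matrix.posSemidef_conjTranspose_mul_self A).1.eigenvectorUnitary : Matrix n n ℂ)).trace.re

/-- The (conditional) min-entropy of a bipartite operator `ρ` on `X ⊗ F`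
relative to an operator `σ` on `F`:
`H_min(ρ|σ) := sup {λ : 2^{-λ} (1_X ⊗ σ) - ρ ≥ 0}`. -/
noncomputable def Hmin {X F : Type*} [Fintype X] [DecidableEq X]
    [Fintype F] [DecidableEq F]
    (ρ : Matrix (X × F) (X × F) ℂ) (σ : Matrix F F ℂ) : ℝ :=
  sSup {l : ℝ | ((((2 : ℝ) ^ (-l) : ℝ) : ℂ) • ((1 : Matrix X X ℂ) ⊗ₖ σ) - ρ).PosSemidef}

section helpers

lemma traceNorm_eq_cfc {n : Type*} [Fintype n] [DecidableEq n] (A : Matrix n n ℂ) :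
    traceNorm A = (cfc Real.sqrt (Aᴴ * A)).trace.re := by
  rw [(posSemidef_conjTranspose_mul_self A).1.cfc_eq, IsHermitian.cfc,
    Unitary.conjStarAlgAut_apply]
  rfl

open scoped MatrixOrder in
lemma psd_eq_sqrt {n : Type*} [Fintype n] [DecidableEq n] {B A : Matrix n n ℂ}
    (hB : B.PosSemidef) (hA : A.PosSemidef) (h : B ^ 2 = A) : B = cfc Real.sqrt A := by
  rw [← cfcₙ_eq_cfc, ← CFC.sqrt_eq_real_sqrt A hA.nonneg, eq_comm,
    CFC.sqrt_eq_iff A B hA.nonneg hB.nonneg, ← sq, h]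

lemma psd_diag_nonneg {n : Type*} [Fintype n] [DecidableEq n] {A : Matrix n n ℂ}
    (hA : A.PosSemidef) (i : n) : 0 ≤ A i i := by
  simpa [dotProduct, Pi.single_apply] using hA.dotProduct_mulVec_nonneg (Pi.single i 1)

lemma psd_smul_real {n : Type*} [Fintype n] [DecidableEq n] {A : Matrix n n ℂ}
    (hA : A.PosSemidef) {r : ℝ} (hr : 0 ≤ r) : ((r : ℂ) • A).PosSemidef := by
  rw [posSemidef_iff_dotProduct_mulVec]
  constructor
  · unfold Matrix.IsHermitian
    rw [conjTranspose_smul, hA.1]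
    congr 1
    simp
  · intro x
    rw [smul_mulVec, dotProduct_smul, smul_eq_mul]
    exact mul_nonneg (by exact_mod_cast hr) (hA.dotProduct_mulVec_nonneg x)

lemma psd_zero_diag {n : Type*} [Fintype n] [DecidableEq n] {A : Matrix n n ℂ}
    (hA : A.PosSemidef) (h : ∀ i, A i i = 0) : A = 0 := by
  ext j i
  have h1 : A *ᵥ Pi.single i 1 = 0 := by
    rw [← hA.dotProduct_mulVec_zero_iff]
    simpa [dotProduct, Pi.single_apply] using h i
  have := congrFun h1 j
  simpa using this


lemma traceNorm_diagonal {n : Type*} [Fintype n] [DecidableEq n] (d : n → ℂ) :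
    traceNorm (diagonal d) = ∑ i, ‖d i‖ := by
  have hB : (diagonal (fun i => (‖d i‖ : ℂ))).PosSemidef :=
    PosSemidef.diagonal (fun i => by
      rw [Complex.le_def]; simp [norm_nonneg])
  have key : ∀ z : ℂ, (‖z‖ : ℂ) * (‖z‖ : ℂ) = star z * z := by
    intro z
    rw [Complex.star_def, ← Complex.normSq_eq_conj_mul_self, Complex.normSq_eq_norm_sq]
    push_cast
    ring
  have hsq : (diagonal (fun i => (‖d i‖ : ℂ))) ^ 2 = (diagonal d)ᴴ * diagonal d := by
    rw [pow_two, diagonal_conjTranspose, diagonal_mul_diagonal, diagonal_mul_diagonal]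
    exact congrArg _ (funext fun i => key (d i))
  have := psd_eq_sqrt hB (posSemidef_conjTranspose_mul_self (diagonal d)) hsq
  rw [traceNorm_eq_cfc, ← this, trace_diagonal]
  rw [Complex.re_sum]
  simp


lemma sum_norm_diag_le_traceNorm {n : Type*} [Fintype n] [DecidableEq n]
    {M : Matrix n n ℂ} (hM : M.IsHermitian) : ∑ i, ‖M i i‖ ≤ traceNorm M := by
  classical
  set U : Matrix n n ℂ := (hM.eigenvectorUnitary : Matrix n n ℂ) with hU
  set lam : n → ℝ := hM.eigenvalues with hlam
  have hUU : star U * U = 1 := by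
    rw [hU]; exact Unitary.coe_star_mul_self _
  have hspec : M = U * diagonal (fun k => (lam k : ℂ)) * star U := by
    have := hM.spectral_theorem
    rw [Unitary.conjStarAlgAut_apply] at this
    exact this
  set N : Matrix n n ℂ := U * diagonal (fun k => ((|lam k| : ℝ) : ℂ)) * star U with hN
  have hNpsd : N.PosSemidef := by
    rw [hN, Matrix.star_eq_conjTranspose]
    exact (PosSemidef.diagonal (fun k => by
      rw [Complex.le_def]; simp [abs_nonneg])).mul_mul_conjTranspose_same U
  have hdiagmul : ∀ (f g : n → ℂ),
      (U * diagonal f * star U) * (U * diagonal g * star U) = U * diagonal (f * g) * star U := by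
    intro f g
    simp only [Matrix.mul_assoc]
    rw [← Matrix.mul_assoc (star U) U, hUU, Matrix.one_mul,
      ← Matrix.mul_assoc (diagonal f), diagonal_mul_diagonal]
    rfl
  have hsq : N ^ 2 = Mᴴ * M := by
    rw [hM.eq, pow_two, hspec, hN, hdiagmul, hdiagmul]
    have : ((fun k => ((|lam k| : ℝ) : ℂ)) * fun k => ((|lam k| : ℝ) : ℂ))
        = ((fun k => ((lam k : ℝ) : ℂ)) * fun k => ((lam k : ℝ) : ℂ)) := by
      funext k
      simp only [Pi.mul_apply]
      rw [← Complex.ofReal_mul, ← Complex.ofReal_mul, abs_mul_abs_self]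
    rw [this]
  have hsqrt := psd_eq_sqrt hNpsd (posSemidef_conjTranspose_mul_self M) hsq
  have htrN : traceNorm M = ∑ k, |lam k| := by
    rw [traceNorm_eq_cfc, ← hsqrt, hN, Matrix.trace_mul_cycle, hUU, Matrix.one_mul,
      trace_diagonal, Complex.re_sum]
    simp
  rw [htrN]
  have hdiag : ∀ i, M i i = ∑ k, (lam k : ℂ) * (U i k * star (U i k)) := by
    intro i
    conv_lhs => rw [hspec]
    rw [Matrix.mul_apply]
    congr 1
    funext k
    rw [Matrix.mul_diagonal, Matrix.star_apply]
    ring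
  have hcol : ∀ k, ∑ i, ‖U i k‖ ^ 2 = 1 := by
    intro k
    have h1 := congrFun (congrFun hUU k) k
    rw [Matrix.mul_apply, Matrix.one_apply_eq] at h1
    have h2 : ∀ i, (star U) k i * U i k = ((‖U i k‖ ^ 2 : ℝ) : ℂ) := by
      intro i
      rw [Matrix.star_apply, Complex.star_def, ← Complex.normSq_eq_conj_mul_self,
        Complex.normSq_eq_norm_sq]
    rw [Finset.sum_congr rfl (fun i _ => h2 i), ← Complex.ofReal_sum] at h1
    exact_mod_cast h1
  calc ∑ i, ‖M i i‖ ≤ ∑ i, ∑ k, |lam k| * ‖U i k‖ ^ 2 := by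
        apply Finset.sum_le_sum
        intro i _
        rw [hdiag i]
        refine (norm_sum_le _ _).trans ?_
        apply Finset.sum_le_sum
        intro k _
        rw [norm_mul, norm_mul, norm_star, Complex.norm_real, Real.norm_eq_abs, pow_two]
    _ = ∑ k, |lam k| := by
        rw [Finset.sum_comm]
        apply Finset.sum_congr rfl
        intro k _
        rw [← Finset.mul_sum, hcol k, mul_one]
lemma kron_entry_sub {X F : Type*} [Fintype X] [DecidableEq X] [Fintype F] [DecidableEq F]
    (c : ℂ) (A : Matrix F F ℂ) (B : Matrix (X × F) (X × F) ℂ) (p : X × F) :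
    (c • ((1 : Matrix X X ℂ) ⊗ₖ A) - B) p p = c * A p.2 p.2 - B p p := by
  simp [Matrix.sub_apply, Matrix.smul_apply, kroneckerMap_apply, one_apply_eq, smul_eq_mul]

lemma kron_diag_sub_diag {X F : Type*} [Fintype X] [DecidableEq X] [Fintype F] [DecidableEq F]
    (c : ℂ) (d : F → ℂ) (e : X × F → ℂ) :
    c • ((1 : Matrix X X ℂ) ⊗ₖ diagonal d) - diagonal e
      = diagonal (fun p => c * d p.2 - e p) := by
  ext ⟨x, f⟩ ⟨x', f'⟩
  by_cases hx : x = x'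
  · subst hx
    by_cases hf : f = f'
    · subst hf
      simp [Matrix.sub_apply, Matrix.smul_apply, kroneckerMap_apply, one_apply_eq, diagonal_apply_eq,
        smul_eq_mul]
    · have hne : ((x, f) : X × F) ≠ (x, f') := by simp [hf]
      simp [Matrix.sub_apply, Matrix.smul_apply, kroneckerMap_apply, one_apply_eq,
        diagonal_apply_ne _ hf, diagonal_apply_ne _ hne, smul_eq_mul]
  · have hne : ((x, f) : X × F) ≠ (x', f') := by simp [hx]
    simp [Matrix.sub_apply, Matrix.smul_apply, kroneckerMap_apply, one_apply_ne hx,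
      diagonal_apply_ne _ hne, smul_eq_mul]

lemma bddAbove_aux {X F : Type*} [Fintype X] [DecidableEq X] [Fintype F] [DecidableEq F]
    (σ0 : Matrix F F ℂ) (hσ0 : σ0.PosSemidef) (hσ0tr : σ0.trace = 1)
    (ρ : Matrix (X × F) (X × F) ℂ) (p : X × F) (hp : 0 < (ρ p p).re) :
    BddAbove {l : ℝ |
      ((((2 : ℝ) ^ (-l) : ℝ) : ℂ) • ((1 : Matrix X X ℂ) ⊗ₖ σ0) - ρ).PosSemidef} := by
  refine ⟨-Real.logb 2 (ρ p p).re, fun l hl => ?_⟩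
  simp only [Set.mem_setOf_eq] at hl
  have h0 := psd_diag_nonneg hl p
  rw [kron_entry_sub] at h0
  rw [Complex.le_def] at h0
  have h1 : (ρ p p).re ≤ ((2 : ℝ) ^ (-l)) * (σ0 p.2 p.2).re := by
    have := h0.1
    simp only [Complex.zero_re, Complex.sub_re, Complex.mul_re, Complex.ofReal_re,
      Complex.ofReal_im, zero_mul, sub_zero] at this
    linarith
  have hs1 : (σ0 p.2 p.2).re ≤ 1 := by
    have h2 : σ0 p.2 p.2 ≤ 1 := by
      have h3 := Finset.single_le_sum (f := fun f => σ0 f f)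
        (fun f _ => psd_diag_nonneg hσ0 f) (Finset.mem_univ p.2)
      have h4 : ∑ f, σ0 f f = 1 := by
        rw [← hσ0tr]; rfl
      rwa [h4] at h3
    rw [Complex.le_def] at h2
    simpa using h2.1
  have hrpos : (0 : ℝ) < (2 : ℝ) ^ (-l) := Real.rpow_pos_of_pos (by norm_num) _
  have h5 : (ρ p p).re ≤ (2 : ℝ) ^ (-l) := by
    calc (ρ p p).re ≤ ((2 : ℝ) ^ (-l)) * (σ0 p.2 p.2).re := h1
      _ ≤ ((2 : ℝ) ^ (-l)) * 1 := by
          apply mul_le_mul_of_nonneg_left hs1 hrpos.le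
      _ = (2 : ℝ) ^ (-l) := mul_one _
  have h6 : Real.logb 2 (ρ p p).re ≤ -l := by
    rw [Real.logb_le_iff_le_rpow (by norm_num) hp]
    exact h5
  linarith

end helpers

/-- Classicality of optimal smoothing. For a classical (diagonal)
bipartite density operator `τ_{XF}`, any `τ'` in the trace-distance `ε`-ball
around `τ` and any unit-trace `σ'_F`, there exist a classical `τ̄` in the
`ε`-ball around `τ` and a classical unit-trace `σ_F` with
`H_min(τ̄|σ) ≥ H_min(τ'|σ')`; hence the smooth min-entropy is achieved by
classical states. -/
theorem classical_smoothing_optimal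
    {X F : Type*} [Fintype X] [DecidableEq X] [Nonempty X]
    [Fintype F] [DecidableEq F] [Nonempty F]
    (ε : ℝ) (hε : 0 ≤ ε)
    (τ : Matrix (X × F) (X × F) ℂ)
    (hτ : τ.PosSemidef) (hτtr : τ.trace = 1) (hτdiag : τ.IsDiag)
    (τ' : Matrix (X × F) (X × F) ℂ)
    (hτ' : τ'.PosSemidef) (hτ'ball : traceNorm (τ' - τ) ≤ ε)
    (σ' : Matrix F F ℂ) (hσ' : σ'.PosSemidef) (hσ'tr : σ'.trace = 1) :
    ∃ (τb : Matrix (X × F) (X × F) ℂ) (σ : Matrix F F ℂ),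
      τb.IsDiag ∧ τb.PosSemidef ∧ traceNorm (τb - τ) ≤ ε ∧
      σ.IsDiag ∧ σ.PosSemidef ∧ σ.trace = 1 ∧
      Hmin τ' σ' ≤ Hmin τb σ := by
  classical
  have hτdiagnn : ∀ p, 0 ≤ τ p p := psd_diag_nonneg hτ
  have hτdd : Matrix.diagonal (fun p => τ p p) = τ := by
    ext i j
    by_cases h : i = j
    · subst h; simp
    · rw [Matrix.diagonal_apply_ne _ h]; exact (hτdiag h).symm
  -- the marginal fallback state
  set g : F → ℂ := fun f => ∑ x, τ (x, f) (x, f) with hg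
  set σm : Matrix F F ℂ := Matrix.diagonal g with hσm
  have hgnn : ∀ f, 0 ≤ g f := fun f => Finset.sum_nonneg fun x _ => hτdiagnn _
  have hσmpsd : σm.PosSemidef := PosSemidef.diagonal hgnn
  have hσmtr : σm.trace = 1 := by
    rw [hσm, Matrix.trace_diagonal, ← hτtr]
    show _ = ∑ p : X × F, τ p p
    rw [Fintype.sum_prod_type, Finset.sum_comm]
  -- a strictly positive diagonal entry of τ
  have hex : ∃ p, 0 < (τ p p).re := by
    by_contra hcon
    push_neg at hcon
    have hz : ∀ p, τ p p = 0 := by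
      intro p
      have h1 := hτdiagnn p
      rw [Complex.le_def] at h1
      apply Complex.ext
      · simpa using le_antisymm (hcon p) (by simpa using h1.1)
      · simpa using h1.2.symm
    have h0 : τ.trace = 0 := by
      show ∑ p : X × F, τ p p = 0
      simp [hz]
    rw [hτtr] at h0
    exact one_ne_zero h0
  obtain ⟨p0, hp0⟩ := hex
  -- the fallback Hmin is nonnegative
  have hfb_bdd := bddAbove_aux (X := X) σm hσmpsd hσmtr τ p0 hp0
  have hfb_mem : ((((2 : ℝ) ^ (-(0:ℝ)) : ℝ) : ℂ) • ((1 : Matrix X X ℂ) ⊗ₖ σm) - τ).PosSemidef := by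
    rw [← hτdd]
    rw [hσm, kron_diag_sub_diag]
    refine PosSemidef.diagonal fun p => ?_
    simp only [Pi.zero_apply]
    have hc : (((2 : ℝ) ^ (-(0:ℝ)) : ℝ) : ℂ) = 1 := by norm_num
    rw [hc, one_mul, sub_nonneg, hg]
    have := Finset.single_le_sum (f := fun x => τ (x, p.2) (x, p.2))
      (fun x _ => hτdiagnn _) (Finset.mem_univ p.1)
    simpa using this
  have hfb : 0 ≤ Hmin τ σm := by
    unfold Hmin
    exact le_csSup hfb_bdd hfb_mem
  have hτtn : traceNorm (τ - τ) ≤ ε := by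
    rw [sub_self, ← Matrix.diagonal_zero, traceNorm_diagonal]
    simpa using hε
  -- the dephased candidates
  set σ : Matrix F F ℂ := Matrix.diagonal (fun f => σ' f f) with hσd
  set τb : Matrix (X × F) (X × F) ℂ := Matrix.diagonal (fun p => τ' p p) with hτbd
  have hσpsd : σ.PosSemidef := PosSemidef.diagonal (fun f => psd_diag_nonneg hσ' f)
  have hσtr : σ.trace = 1 := by
    rw [hσd, Matrix.trace_diagonal, ← hσ'tr]
    rfl
  have hτbpsd : τb.PosSemidef := PosSemidef.diagonal (fun p => psd_diag_nonneg hτ' p)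
  have hτbball : traceNorm (τb - τ) ≤ ε := by
    have h1 : τb - τ = Matrix.diagonal (fun p => (τ' - τ) p p) := by
      conv_lhs => rw [hτbd, ← hτdd]
      rw [Matrix.diagonal_sub]
      rfl
    rw [h1, traceNorm_diagonal]
    exact (sum_norm_diag_le_traceNorm (hτ'.1.sub hτ.1)).trans hτ'ball
  -- the subset relation (dephasing preserves the feasible set)
  have hsub : {l : ℝ | ((((2 : ℝ) ^ (-l) : ℝ) : ℂ) • ((1 : Matrix X X ℂ) ⊗ₖ σ') - τ').PosSemidef}
      ⊆ {l : ℝ | ((((2 : ℝ) ^ (-l) : ℝ) : ℂ) • ((1 : Matrix X X ℂ) ⊗ₖ σ) - τb).PosSemidef} := by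
    intro l hl
    simp only [Set.mem_setOf_eq] at hl ⊢
    rw [hσd, hτbd, kron_diag_sub_diag]
    refine PosSemidef.diagonal fun p => ?_
    simp only [Pi.zero_apply]
    have := psd_diag_nonneg hl p
    rwa [kron_entry_sub] at this
  by_cases hS : {l : ℝ | ((((2 : ℝ) ^ (-l) : ℝ) : ℂ) •
      ((1 : Matrix X X ℂ) ⊗ₖ σ') - τ').PosSemidef}.Nonempty
  · by_cases hp' : ∀ p, τ' p p = 0
    · -- τ' = 0: the LHS sup is 0, use the fallback
      have hτ'0 : τ' = 0 := psd_zero_diag hτ' hp'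
      obtain ⟨l₀, hl₀⟩ := hS
      simp only [Set.mem_setOf_eq, hτ'0, sub_zero] at hl₀
      have hSuniv : {l : ℝ | ((((2 : ℝ) ^ (-l) : ℝ) : ℂ) •
          ((1 : Matrix X X ℂ) ⊗ₖ σ') - τ').PosSemidef} = Set.univ := by
        ext l
        simp only [Set.mem_setOf_eq, Set.mem_univ, iff_true, hτ'0, sub_zero]
        have hr0 : (0:ℝ) < (2:ℝ) ^ (-l₀) := Real.rpow_pos_of_pos (by norm_num) _
        have hrat : (0:ℝ) ≤ (2:ℝ) ^ (-l) / (2:ℝ) ^ (-l₀) :=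
          div_nonneg (Real.rpow_pos_of_pos (by norm_num) _).le hr0.le
        have key : (((2:ℝ) ^ (-l) : ℝ) : ℂ) • ((1 : Matrix X X ℂ) ⊗ₖ σ')
            = (((2:ℝ) ^ (-l) / (2:ℝ) ^ (-l₀) : ℝ) : ℂ) •
              ((((2:ℝ) ^ (-l₀) : ℝ) : ℂ) • ((1 : Matrix X X ℂ) ⊗ₖ σ')) := by
          rw [smul_smul, ← Complex.ofReal_mul, div_mul_cancel₀ _ (ne_of_gt hr0)]
        rw [key]
        exact psd_smul_real hl₀ hrat
      have hL : Hmin τ' σ' = 0 := by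
        unfold Hmin
        rw [hSuniv, Real.sSup_univ]
      refine ⟨τ, σm, hτdiag, hτ, hτtn, Matrix.isDiag_diagonal g, hσmpsd, hσmtr, ?_⟩
      rw [hL]; exact hfb
    · -- some positive diagonal entry of τ': the dephased set is bounded above
      push_neg at hp'
      obtain ⟨p1, hp1⟩ := hp'
      have hp1nn := psd_diag_nonneg hτ' p1
      rw [Complex.le_def] at hp1nn
      have hp1re : 0 < (τb p1 p1).re := by
        rw [hτbd, Matrix.diagonal_apply_eq]
        rcases lt_or_eq_of_le hp1nn.1 with h | h
        · simpa using h
        · exfalso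
          apply hp1
          apply Complex.ext
          · simpa using h.symm
          · simpa using hp1nn.2.symm
      have hT_bdd := bddAbove_aux σ hσpsd hσtr τb p1 hp1re
      refine ⟨τb, σ, Matrix.isDiag_diagonal _, hτbpsd, hτbball,
        Matrix.isDiag_diagonal _, hσpsd, hσtr, ?_⟩
      unfold Hmin
      exact csSup_le_csSup hT_bdd hS hsub
  · -- the original feasible set is empty: its sup is 0, use the fallback
    have hL : Hmin τ' σ' = 0 := by
      unfold Hmin
      rw [Set.not_nonempty_iff_eq_empty.mp hS, Real.sSup_empty]
    refine ⟨τ, σm, hτdiag, hτ, hτtn, Matrix.isDiag_diagonal g, hσmpsd, hσmtr, ?_⟩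
    rw [hL]; exact hfb
end

section
/- (Hypergeometric tail bound, Chvátal) Let X follow the hypergeometric distribution counting marked items when drawing m items without replacement from a population of L items of which K are marked, and let mu = m*K/L. Then for any t >= 0, P(X >= mu + t*m) <= exp(-2*t^2*m), and symmetrically P(X <= mu - t*m) <= exp(-2*t^2*m). -/
open Finset Real

lemma bernoulli_mgf_bound_s19 {p : ℝ} (hp0 : 0 ≤ p) (hp1 : p ≤ 1) (lam : ℝ) (hlam : 0 ≤ lam) :
    1 - p + p * exp lam ≤ exp (lam * p + lam ^ 2 / 8) := by
  set q : ℝ := 1 - p with hq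
  have hq0 : 0 ≤ q := by simp [hq]; linarith
  -- denominator positivity
  have hd : ∀ s : ℝ, 0 < q + p * exp s := by
    intro s
    rcases lt_or_eq_of_le hp0 with h | h
    · positivity
    · have : q = 1 := by simp [hq, ← h]
      rw [this, ← h]; norm_num
  -- h(s) = p*s + s^2/8 - log (q + p * exp s)
  set f : ℝ → ℝ := fun s => p * s + s ^ 2 / 8 - log (q + p * exp s) with hf
  set f' : ℝ → ℝ := fun s => p + s / 4 - p * exp s / (q + p * exp s) with hf'
  have hderiv : ∀ s : ℝ, HasDerivAt f (f' s) s := by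
    intro s
    have h1 : HasDerivAt (fun s : ℝ => q + p * exp s) (p * exp s) s := by
      simpa using ((Real.hasDerivAt_exp s).const_mul p).const_add q
    have h2 : HasDerivAt (fun s : ℝ => log (q + p * exp s)) (p * exp s / (q + p * exp s)) s :=
      h1.log (hd s).ne'
    have h3 : HasDerivAt (fun s : ℝ => p * s + s ^ 2 / 8) (p + s / 4) s := by
      have := ((hasDerivAt_pow 2 s).div_const 8).const_add 0
      have h4 : HasDerivAt (fun s : ℝ => p * s) p s := by simpa using (hasDerivAt_id s).const_mul p
      have h5 := h4.add ((hasDerivAt_pow 2 s).div_const 8)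
      exact h5.congr_deriv (by norm_num; ring)
    exact h3.sub h2
  have hderiv' : ∀ s : ℝ, HasDerivAt f' (1 / 4 - q * (p * exp s) / (q + p * exp s) ^ 2) s := by
    intro s
    have h1 : HasDerivAt (fun s : ℝ => q + p * exp s) (p * exp s) s := by
      simpa using ((Real.hasDerivAt_exp s).const_mul p).const_add q
    have h2 : HasDerivAt (fun s : ℝ => p * exp s) (p * exp s) s :=
      (Real.hasDerivAt_exp s).const_mul p
    have h3 : HasDerivAt (fun s : ℝ => p * exp s / (q + p * exp s))
        ((p * exp s * (q + p * exp s) - p * exp s * (p * exp s)) / (q + p * exp s) ^ 2) s :=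
      h2.div h1 (hd s).ne'
    have h4 : HasDerivAt (fun s : ℝ => p + s / 4) (1 / 4) s := by
      simpa using ((hasDerivAt_id s).div_const 4).const_add p
    have h5 := h4.sub h3
    have := (hd s).ne'
    exact h5.congr_deriv (by field_simp; ring)
  -- f' is nonneg on [0, ∞)
  have hf'0 : f' 0 = 0 := by
    have := (hd 0).ne'
    simp only [hf']
    rw [Real.exp_zero]
    field_simp [hq]
    rw [hq]; ring
  have hsecond_nonneg : ∀ s : ℝ, 0 ≤ 1 / 4 - q * (p * exp s) / (q + p * exp s) ^ 2 := by
    intro s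
    rw [sub_nonneg, div_le_div_iff₀ (pow_pos (hd s) 2) (by positivity : (0:ℝ) < 4)]
    nlinarith [sq_nonneg (q - p * exp s), (hd s).le]
  have hmono' : MonotoneOn f' (Set.Ici (0:ℝ)) := by
    apply monotoneOn_of_deriv_nonneg (convex_Ici 0)
    · exact (fun s _ => (hderiv' s).differentiableAt.continuousAt.continuousWithinAt)
    · intro s hs; exact (hderiv' s).differentiableAt.differentiableWithinAt
    · intro s hs
      rw [(hderiv' s).deriv]
      exact hsecond_nonneg s
  have hf'nonneg : ∀ s ∈ Set.Ici (0:ℝ), 0 ≤ f' s := by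
    intro s hs
    calc (0:ℝ) = f' 0 := hf'0.symm
    _ ≤ f' s := hmono' (by simp) hs hs
  have hmono : MonotoneOn f (Set.Ici (0:ℝ)) := by
    apply monotoneOn_of_deriv_nonneg (convex_Ici 0)
    · exact (fun s _ => (hderiv s).differentiableAt.continuousAt.continuousWithinAt)
    · intro s hs; exact (hderiv s).differentiableAt.differentiableWithinAt
    · intro s hs
      rw [(hderiv s).deriv]
      exact hf'nonneg s (interior_subset hs)
  have hf0 : f 0 = 0 := by simp [hf, hq]
  have : 0 ≤ f lam := by
    calc (0:ℝ) = f 0 := hf0.symm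
    _ ≤ f lam := hmono (by simp) hlam hlam
  have hlog : log (q + p * exp lam) ≤ p * lam + lam ^ 2 / 8 := by
    simp only [hf] at this; linarith
  calc 1 - p + p * exp lam = q + p * exp lam := by rw [hq]
  _ = exp (log (q + p * exp lam)) := (Real.exp_log (hd lam)).symm
  _ ≤ exp (lam * p + lam ^ 2 / 8) := by apply Real.exp_le_exp.2; rw [mul_comm lam p]; exact hlog


lemma descFactorial_mul_pow_le {K L : ℕ} (hKL : K ≤ L) (j : ℕ) :
    K.descFactorial j * L ^ j ≤ L.descFactorial j * K ^ j := by
  induction j with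
  | zero => simp
  | succ j ih =>
    rw [Nat.descFactorial_succ, Nat.descFactorial_succ, pow_succ, pow_succ]
    have h1 : (K - j) * L ≤ (L - j) * K := by
      rw [Nat.sub_mul, Nat.sub_mul]
      have h2 : j * K ≤ j * L := Nat.mul_le_mul_left j hKL
      have h3 : L * K = K * L := Nat.mul_comm L K
      omega
    calc (K - j) * K.descFactorial j * (L ^ j * L)
        = ((K - j) * L) * (K.descFactorial j * L ^ j) := by ring
      _ ≤ ((L - j) * K) * (L.descFactorial j * K ^ j) := Nat.mul_le_mul h1 ih
      _ = (L - j) * L.descFactorial j * (K ^ j * K) := by ring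

-- superset count
lemma card_supersets_s19 {L m j : ℕ} (T : Finset (Fin L)) (hT : T.card = j) (hjm : j ≤ m) :
    (((univ : Finset (Fin L)).powersetCard m).filter (fun S => T ⊆ S)).card
      = (L - j).choose (m - j) := by
  have : (((univ : Finset (Fin L)).powersetCard m).filter (fun S => T ⊆ S)).card
      = (Tᶜ.powersetCard (m - j)).card := by
    apply Finset.card_bij' (fun S _ => S \ T) (fun A _ => A ∪ T)
    · intro S hS
      simp only [mem_filter, mem_powersetCard] at hS
      obtain ⟨⟨_, hcard⟩, hTS⟩ := hS
      simp only [mem_powersetCard]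
      constructor
      · intro x hx
        simp only [mem_sdiff] at hx
        simp [Finset.mem_compl, hx.2]
      · rw [card_sdiff_of_subset hTS, hcard, hT]
    · intro A hA
      simp only [mem_powersetCard] at hA
      obtain ⟨hAc, hcard⟩ := hA
      have hdisj : Disjoint A T := by
        rw [Finset.disjoint_right]
        intro x hxT hxA
        have := hAc hxA
        simp [Finset.mem_compl] at this
        exact this hxT
      simp only [mem_filter, mem_powersetCard]
      refine ⟨⟨subset_univ _, ?_⟩, subset_union_right⟩
      rw [card_union_of_disjoint hdisj, hcard, hT]
      omega
    · intro S hS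
      simp only [mem_filter, mem_powersetCard] at hS
      exact sdiff_union_of_subset hS.2
    · intro A hA
      simp only [mem_powersetCard] at hA
      apply union_sdiff_cancel_right
      rw [Finset.disjoint_right]
      intro x hxT hxA
      have := hA.1 hxA
      simp [Finset.mem_compl] at this
      exact this hxT
  rw [this, card_powersetCard, card_compl, hT, Fintype.card_fin]

lemma sum_choose_inter_s19 {L m : ℕ} (M : Finset (Fin L)) (j : ℕ) (hjm : j ≤ m) :
    ∑ S ∈ (univ : Finset (Fin L)).powersetCard m, ((S ∩ M).card.choose j)
      = M.card.choose j * (L - j).choose (m - j) := by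
  have key : ∀ S : Finset (Fin L), (S ∩ M).card.choose j
      = ((M.powersetCard j).filter (fun T => T ⊆ S)).card := by
    intro S
    rw [← card_powersetCard]
    congr 1
    ext T
    simp only [mem_powersetCard, mem_filter, subset_inter_iff]
    tauto
  simp_rw [key, Finset.card_filter]
  rw [Finset.sum_comm]
  have inner : ∀ T ∈ M.powersetCard j,
      (∑ S ∈ (univ : Finset (Fin L)).powersetCard m, if T ⊆ S then 1 else 0)
        = (L - j).choose (m - j) := by
    intro T hT
    rw [← Finset.card_filter]
    exact card_supersets_s19 T (mem_powersetCard.1 hT).2 hjm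
  rw [Finset.sum_congr rfl inner, Finset.sum_const, card_powersetCard, smul_eq_mul]




lemma choose_ratio_le {K L j : ℕ} (hKL : K ≤ L) (hL : 0 < L) :
    (K.choose j : ℝ) ≤ (L.choose j : ℝ) * ((K : ℝ) / L) ^ j := by
  have hnat : K.choose j * L ^ j ≤ L.choose j * K ^ j := by
    have h := descFactorial_mul_pow_le hKL j
    rw [Nat.descFactorial_eq_factorial_mul_choose, Nat.descFactorial_eq_factorial_mul_choose] at h
    have h' : Nat.factorial j * (K.choose j * L ^ j) ≤ Nat.factorial j * (L.choose j * K ^ j) := by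
      calc Nat.factorial j * (K.choose j * L ^ j) = Nat.factorial j * K.choose j * L ^ j := by ring
      _ ≤ Nat.factorial j * L.choose j * K ^ j := h
      _ = Nat.factorial j * (L.choose j * K ^ j) := by ring
    exact Nat.le_of_mul_le_mul_left h' (Nat.factorial_pos j)
  have hLj : (0:ℝ) < (L:ℝ) ^ j := by positivity
  rw [div_pow, ← mul_div_assoc, le_div_iff₀ hLj]
  calc (K.choose j : ℝ) * ↑L ^ j = ((K.choose j * L ^ j : ℕ) : ℝ) := by push_cast; ring
  _ ≤ ((L.choose j * K ^ j : ℕ) : ℝ) := by exact_mod_cast hnat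
  _ = (L.choose j : ℝ) * ↑K ^ j := by push_cast; ring

lemma mgf_bound {L K m : ℕ} (hK : K ≤ L) (hm : m ≤ L) (hL : 0 < L)
    (M : Finset (Fin L)) (hM : M.card = K) {x : ℝ} (hx : 0 ≤ x) :
    ∑ S ∈ (univ : Finset (Fin L)).powersetCard m, (1 + x) ^ ((S ∩ M).card)
      ≤ (L.choose m : ℝ) * (1 + ((K : ℝ) / L) * x) ^ m := by
  set p : ℝ := (K : ℝ) / L with hp
  have expand : ∀ S ∈ (univ : Finset (Fin L)).powersetCard m,
      (1 + x) ^ ((S ∩ M).card)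
        = ∑ j ∈ range (m + 1), (((S ∩ M).card.choose j : ℝ)) * x ^ j := by
    intro S hS
    have hcard : (S ∩ M).card ≤ m := by
      have := (mem_powersetCard.1 hS).2
      calc (S ∩ M).card ≤ S.card := card_le_card inter_subset_left
      _ = m := this
    set k := (S ∩ M).card
    rw [add_comm (1:ℝ) x, add_pow]
    simp only [one_pow, mul_one]
    rw [← Finset.sum_subset (Finset.range_subset_range.2 (Nat.succ_le_succ hcard))]
    · apply Finset.sum_congr rfl
      intro j hj; ring
    · intro j hj hj2
      simp only [mem_range, not_lt] at hj2
      rw [Nat.choose_eq_zero_of_lt (by omega)]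
      simp
  rw [Finset.sum_congr rfl expand, Finset.sum_comm]
  have term_bound : ∀ j ∈ range (m + 1),
      (∑ S ∈ (univ : Finset (Fin L)).powersetCard m, ((S ∩ M).card.choose j : ℝ) * x ^ j)
        ≤ (L.choose m : ℝ) * ((m.choose j : ℝ) * (p * x) ^ j) := by
    intro j hj
    have hjm : j ≤ m := by simp only [mem_range] at hj; omega
    rw [← Finset.sum_mul, ← Nat.cast_sum, sum_choose_inter_s19 M j hjm, hM]
    have hLj : (0:ℝ) < (L.choose j : ℝ) := by
      exact_mod_cast Nat.choose_pos (hjm.trans hm)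
    have hid : (L.choose m : ℝ) * (m.choose j : ℝ) = (L.choose j : ℝ) * ((L - j).choose (m - j) : ℝ) := by
      exact_mod_cast congrArg (Nat.cast (R := ℝ)) (Nat.choose_mul (n := L) hjm)
    have hratio := choose_ratio_le (j := j) hK hL
    have hC : (0:ℝ) ≤ ((L - j).choose (m - j) : ℝ) := Nat.cast_nonneg _
    have hxj : (0:ℝ) ≤ x ^ j := by positivity
    calc ((K.choose j * (L - j).choose (m - j) : ℕ) : ℝ) * x ^ j
        = (K.choose j : ℝ) * ((L - j).choose (m - j) : ℝ) * x ^ j := by push_cast; ring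
      _ ≤ ((L.choose j : ℝ) * p ^ j) * ((L - j).choose (m - j) : ℝ) * x ^ j := by
          apply mul_le_mul_of_nonneg_right (mul_le_mul_of_nonneg_right hratio hC) hxj
      _ = ((L.choose j : ℝ) * ((L - j).choose (m - j) : ℝ)) * (p ^ j * x ^ j) := by ring
      _ = (L.choose m : ℝ) * ((m.choose j : ℝ) * (p * x) ^ j) := by rw [← hid, mul_pow]; ring
  calc ∑ j ∈ range (m + 1), ∑ S ∈ (univ : Finset (Fin L)).powersetCard m,
        ((S ∩ M).card.choose j : ℝ) * x ^ j
      ≤ ∑ j ∈ range (m + 1), (L.choose m : ℝ) * ((m.choose j : ℝ) * (p * x) ^ j) :=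
        Finset.sum_le_sum term_bound
    _ = (L.choose m : ℝ) * (1 + p * x) ^ m := by
        rw [← Finset.mul_sum]
        congr 1
        rw [add_comm (1:ℝ) (p*x), add_pow]
        simp only [one_pow, mul_one]
        apply Finset.sum_congr rfl
        intro j hj; ring




lemma upper_tail {L K m : ℕ} (hK : K ≤ L) (hm : m ≤ L) (hL : 0 < L)
    (M : Finset (Fin L)) (hM : M.card = K) {t : ℝ} (ht : 0 ≤ t) :
    ({S : Finset (Fin L) | S.card = m ∧
        ((m : ℝ) * K / L + t * m ≤ ((S ∩ M).card : ℝ))}.ncard : ℝ)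
      ≤ (L.choose m : ℝ) * Real.exp (-2 * t ^ 2 * m) := by
  have hset : {S : Finset (Fin L) | S.card = m ∧
        ((m : ℝ) * K / L + t * m ≤ ((S ∩ M).card : ℝ))}
      = ↑((((univ : Finset (Fin L)).powersetCard m).filter
          (fun S => (m : ℝ) * K / L + t * m ≤ ((S ∩ M).card : ℝ)))) := by
    ext S
    simp only [Set.mem_setOf_eq, coe_filter, mem_powersetCard, subset_univ, true_and]
  rw [hset, Set.ncard_coe_finset]
  set p : ℝ := (K : ℝ) / L with hp
  have hp0 : 0 ≤ p := by positivity
  have hp1 : p ≤ 1 := by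
    rw [hp, div_le_one (by exact_mod_cast hL)]
    exact_mod_cast hK
  set lam : ℝ := 4 * t with hlam
  have hlam0 : 0 ≤ lam := by positivity
  set c : ℝ := (m : ℝ) * K / L + t * m with hc
  set x : ℝ := exp lam - 1 with hx
  have hx0 : 0 ≤ x := by
    rw [hx, sub_nonneg]
    exact Real.one_le_exp hlam0
  have step1 : ((((univ : Finset (Fin L)).powersetCard m).filter
        (fun S => c ≤ ((S ∩ M).card : ℝ))).card : ℝ)
      ≤ ∑ S ∈ (univ : Finset (Fin L)).powersetCard m,
          exp (lam * ((S ∩ M).card : ℝ)) * exp (-lam * c) := by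
    rw [Finset.card_eq_sum_ones, Nat.cast_sum]
    have h1 : ∀ S ∈ (((univ : Finset (Fin L)).powersetCard m).filter
        (fun S => c ≤ ((S ∩ M).card : ℝ))), ((1:ℕ):ℝ) ≤ exp (lam * ((S ∩ M).card : ℝ)) * exp (-lam * c) := by
      intro S hS
      have hSc := (Finset.mem_filter.1 hS).2
      rw [← Real.exp_add, Nat.cast_one]
      apply Real.one_le_exp
      nlinarith
    calc (∑ S ∈ (((univ : Finset (Fin L)).powersetCard m).filter
          (fun S => c ≤ ((S ∩ M).card : ℝ))), ((1:ℕ):ℝ))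
        ≤ ∑ S ∈ (((univ : Finset (Fin L)).powersetCard m).filter
          (fun S => c ≤ ((S ∩ M).card : ℝ))), exp (lam * ((S ∩ M).card : ℝ)) * exp (-lam * c) :=
          Finset.sum_le_sum h1
      _ ≤ ∑ S ∈ (univ : Finset (Fin L)).powersetCard m,
            exp (lam * ((S ∩ M).card : ℝ)) * exp (-lam * c) := by
          apply Finset.sum_le_sum_of_subset_of_nonneg (Finset.filter_subset _ _)
          intro S _ _
          positivity
  have expeq : ∀ S : Finset (Fin L),
      exp (lam * ((S ∩ M).card : ℝ)) = (1 + x) ^ ((S ∩ M).card) := by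
    intro S
    rw [hx]
    have : (1:ℝ) + (exp lam - 1) = exp lam := by ring
    rw [this, ← Real.exp_nat_mul, mul_comm]
  have step2 : ∑ S ∈ (univ : Finset (Fin L)).powersetCard m,
        exp (lam * ((S ∩ M).card : ℝ)) * exp (-lam * c)
      ≤ ((L.choose m : ℝ) * (1 + p * x) ^ m) * exp (-lam * c) := by
    rw [← Finset.sum_mul]
    apply mul_le_mul_of_nonneg_right _ (Real.exp_pos _).le
    simp_rw [expeq]
    exact mgf_bound hK hm hL M hM hx0
  have step3 : (1 + p * x) ^ m ≤ exp ((lam * p + lam ^ 2 / 8) * m) := by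
    have hb : 1 + p * x ≤ exp (lam * p + lam ^ 2 / 8) := by
      have := bernoulli_mgf_bound_s19 hp0 hp1 lam hlam0
      calc 1 + p * x = 1 - p + p * exp lam := by rw [hx]; ring
      _ ≤ exp (lam * p + lam ^ 2 / 8) := this
    calc (1 + p * x) ^ m ≤ (exp (lam * p + lam ^ 2 / 8)) ^ m :=
          pow_le_pow_left₀ (by positivity) hb m
    _ = exp ((lam * p + lam ^ 2 / 8) * m) := by rw [← Real.exp_nat_mul, mul_comm]
  have hcμ : c = p * m + t * m := by
    rw [hc, hp]; ring
  have final : exp ((lam * p + lam ^ 2 / 8) * m) * exp (-lam * c) = exp (-2 * t ^ 2 * m) := by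
    rw [← Real.exp_add]
    congr 1
    rw [hcμ, hlam]
    ring
  calc ((((univ : Finset (Fin L)).powersetCard m).filter
        (fun S => c ≤ ((S ∩ M).card : ℝ))).card : ℝ)
      ≤ ∑ S ∈ (univ : Finset (Fin L)).powersetCard m,
          exp (lam * ((S ∩ M).card : ℝ)) * exp (-lam * c) := step1
    _ ≤ ((L.choose m : ℝ) * (1 + p * x) ^ m) * exp (-lam * c) := step2
    _ ≤ ((L.choose m : ℝ) * exp ((lam * p + lam ^ 2 / 8) * m)) * exp (-lam * c) := by
        apply mul_le_mul_of_nonneg_right _ (Real.exp_pos _).le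
        exact mul_le_mul_of_nonneg_left step3 (Nat.cast_nonneg _)
    _ = (L.choose m : ℝ) * Real.exp (-2 * t ^ 2 * m) := by
        rw [mul_assoc, final]


/-- Chvátal's tail bound for the hypergeometric distribution.
Drawing `m` items uniformly without replacement from a population of `L` items
of which `K` are marked (`M` is the marked set), with `μ = mK/L`, the
probability that the number of marked items drawn is at least `μ + tm` is at
most `exp(-2t²m)`, and symmetrically for the lower tail. -/
theorem hypergeometric_tail_bound
    (L K m : ℕ) (hK : K ≤ L) (hm : m ≤ L)
    (M : Finset (Fin L)) (hM : M.card = K) (t : ℝ) (ht : 0 ≤ t) :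
    (({S : Finset (Fin L) | S.card = m ∧
          ((m : ℝ) * K / L + t * m ≤ ((S ∩ M).card : ℝ))}.ncard : ℝ) / (L.choose m)
        ≤ Real.exp (-2 * t ^ 2 * m)) ∧
    (({S : Finset (Fin L) | S.card = m ∧
          (((S ∩ M).card : ℝ) ≤ (m : ℝ) * K / L - t * m)}.ncard : ℝ) / (L.choose m)
        ≤ Real.exp (-2 * t ^ 2 * m)) := by
  rcases Nat.eq_zero_or_pos L with hL | hL
  · -- degenerate case L = 0
    subst hL
    have hm0 : m = 0 := Nat.le_zero.1 hm
    subst hm0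
    have hgen : ∀ A : Set (Finset (Fin 0)),
        ((A.ncard : ℝ) / ((0:ℕ).choose 0) ≤ Real.exp (-2 * t ^ 2 * (0:ℕ))) := by
      intro A
      have hA : A ⊆ {∅} := by
        intro S _
        simp [Finset.eq_empty_of_isEmpty S]
      have h1 : A.ncard ≤ 1 := by
        calc A.ncard ≤ ({∅} : Set (Finset (Fin 0))).ncard :=
              Set.ncard_le_ncard hA (Set.finite_singleton _)
        _ = 1 := Set.ncard_singleton _
      have : ((A.ncard : ℝ)) ≤ 1 := by exact_mod_cast h1
      simpa using this
    exact ⟨hgen _, hgen _⟩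
  have hLR : (0:ℝ) < (L:ℝ) := by exact_mod_cast hL
  have hchoosepos : (0:ℝ) < (L.choose m : ℝ) := by exact_mod_cast Nat.choose_pos hm
  constructor
  · -- upper tail
    have h := upper_tail hK hm hL M hM ht
    rw [div_le_iff₀ hchoosepos]
    linarith [h]
  · -- lower tail
    have hM' : Mᶜ.card = L - K := by
      rw [Finset.card_compl, hM, Fintype.card_fin]
    have equiv : ∀ S : Finset (Fin L), S.card = m →
        ((m : ℝ) * ((L - K : ℕ) : ℝ) / L + t * m ≤ ((S ∩ Mᶜ).card : ℝ)
          ↔ ((S ∩ M).card : ℝ) ≤ (m : ℝ) * K / L - t * m) := by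
      intro S hcard
      have h1 : S ∩ Mᶜ = S \ M := (sdiff_eq (x := S) (y := M)).symm
      have h2 : (S ∩ M).card + (S \ M).card = S.card := Finset.card_inter_add_card_sdiff S M
      have hint : ((S ∩ Mᶜ).card : ℝ) = (m : ℝ) - ((S ∩ M).card : ℝ) := by
        rw [h1]
        rw [hcard] at h2
        have := congrArg (Nat.cast (R := ℝ)) h2
        push_cast at this
        linarith
      have hkey : (m : ℝ) * ((L : ℝ) - (K : ℝ)) / L = (m : ℝ) - (m : ℝ) * K / L := by
        field_simp
      rw [hint, Nat.cast_sub hK, hkey]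
      constructor <;> intro h <;> linarith
    have hset : {S : Finset (Fin L) | S.card = m ∧
          (((S ∩ M).card : ℝ) ≤ (m : ℝ) * K / L - t * m)}
        = {S : Finset (Fin L) | S.card = m ∧
          ((m : ℝ) * ((L - K : ℕ) : ℝ) / L + t * m ≤ ((S ∩ Mᶜ).card : ℝ))} := by
      ext S
      simp only [Set.mem_setOf_eq]
      constructor
      · rintro ⟨hcard, hcond⟩
        exact ⟨hcard, (equiv S hcard).2 hcond⟩
      · rintro ⟨hcard, hcond⟩
        exact ⟨hcard, (equiv S hcard).1 hcond⟩
    have h := upper_tail (Nat.sub_le L K) hm hL Mᶜ hM' ht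
    rw [hset, div_le_iff₀ hchoosepos]
    linarith [h]
end
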